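/- arXiv:1611.09126 — 10 statements merged into one kernel-verified Lean document; each statement's English description precedes it below -/
import Mathlib

section
/- For $0 < r \le 2$ and positive reals $x_1 \le \cdots \le x_n$ with positive weights $q_i$ summing to $1$, the inequality $M_{n,r} - G_n \le \frac{r}{2 x_1} \sigma_n$ holds, where $x_1 = \min_i x_i$. -/
open Real Set



private lemma nonneg_on_Ici (a : ℝ) (f f' : ℝ → ℝ)
    (hd : ∀ t, a ≤ t → HasDerivAt f (f' t) t)
    (h0 : f a = 0) (hp : ∀ t, a < t → 0 ≤ f' t) :
    ∀ t, a ≤ t → 0 ≤ f t := by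
  intro t ht
  have hmono : MonotoneOn f (Set.Ici a) := by
    apply monotoneOn_of_deriv_nonneg (convex_Ici a)
    · exact fun s hs => (hd s hs).continuousAt.continuousWithinAt
    · intro s hs
      rw [interior_Ici] at hs
      exact (hd s hs.le).differentiableAt.differentiableWithinAt
    · intro s hs
      rw [interior_Ici] at hs
      rw [(hd s hs.le).deriv]
      exact hp s hs
  have := hmono (Set.self_mem_Ici (a := a)) (Set.mem_Ici.mpr ht) ht
  linarith [h0 ▸ this]

/-- L2 : exp (-t) ≤ 1 - t + t²/2 for t ≥ 0 -/
private lemma L2 {t : ℝ} (ht : 0 ≤ t) : Real.exp (-t) ≤ 1 - t + t^2/2 := by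
  have key := nonneg_on_Ici 0 (fun s => 1 - s + s^2/2 - Real.exp (-s))
      (fun s => -1 + s + Real.exp (-s)) ?_ (by norm_num) ?_ t ht
  · linarith
  · intro s _
    have h1 : HasDerivAt (fun u : ℝ => Real.exp (-u)) (-Real.exp (-s)) s := by
      exact ((hasDerivAt_id s).neg.exp).congr_deriv (by simp)
    have h2 : HasDerivAt (fun u : ℝ => 1 - u + u^2/2) (-1 + s) s := by
      have : HasDerivAt (fun u : ℝ => 1 - u + u^2/2) (0 - 1 + 2*s^1/2) s :=
        (((hasDerivAt_const s (1:ℝ)).sub (hasDerivAt_id s)).add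
          (((hasDerivAt_pow 2 s)).div_const 2))
      convert this using 1; norm_num
    have := h2.sub h1
    exact this.congr_deriv (by ring)
  · intro s hs
    have := Real.add_one_le_exp (-s)
    linarith

/-- L2b : 1 - t + t²/2 - t³/6 ≤ exp (-t) for t ≥ 0 -/
private lemma L2b {t : ℝ} (ht : 0 ≤ t) : 1 - t + t^2/2 - t^3/6 ≤ Real.exp (-t) := by
  have key := nonneg_on_Ici 0 (fun s => Real.exp (-s) - (1 - s + s^2/2 - s^3/6))
      (fun s => -Real.exp (-s) + (1 - s + s^2/2)) ?_ (by norm_num) ?_ t ht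
  · linarith
  · intro s _
    have h1 : HasDerivAt (fun u : ℝ => Real.exp (-u)) (-Real.exp (-s)) s := by
      exact ((hasDerivAt_id s).neg.exp).congr_deriv (by simp)
    have h2 : HasDerivAt (fun u : ℝ => 1 - u + u^2/2 - u^3/6) (-1 + s - s^2/2) s := by
      have : HasDerivAt (fun u : ℝ => 1 - u + u^2/2 - u^3/6)
          (0 - 1 + 2*s^1/2 - 3*s^2/6) s :=
        ((((hasDerivAt_const s (1:ℝ)).sub (hasDerivAt_id s)).add
          (((hasDerivAt_pow 2 s)).div_const 2)).sub ((hasDerivAt_pow 3 s).div_const 6))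
      convert this using 1; norm_num; ring
    have := h1.sub h2
    exact this.congr_deriv (by ring)
  · intro s hs
    have := L2 hs.le
    linarith

/-- L1 : exp u - 1 - u ≤ u²/2 * exp u for u ≥ 0 -/
private lemma L1 {u : ℝ} (hu : 0 ≤ u) : Real.exp u - 1 - u ≤ u^2/2 * Real.exp u := by
  have hpos := Real.exp_pos u
  have hneg := Real.exp_pos (-u)
  have hprod : Real.exp u * Real.exp (-u) = 1 := by
    rw [← Real.exp_add]; simp
  rcases le_or_gt (u^2) 2 with h | h
  · have hb := L2b hu
    have hu2 : u ≤ 2 := by nlinarith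
    have h3 : 1 - u^2/2 ≤ (1+u) * Real.exp (-u) := by
      nlinarith [mul_le_mul_of_nonneg_left hb (by linarith : (0:ℝ) ≤ 1+u),
        mul_nonneg (mul_nonneg hu hu) (mul_nonneg hu (by linarith : (0:ℝ) ≤ 2 - u))]
    have h6 := mul_le_mul_of_nonneg_left h3 hpos.le
    have h5 : Real.exp u * ((1+u) * Real.exp (-u)) = 1 + u := by
      rw [mul_comm ((1:ℝ)+u) (Real.exp (-u)), ← mul_assoc, hprod, one_mul]
    rw [h5] at h6
    nlinarith
  · have h4 : (0:ℝ) ≤ (1+u) * Real.exp (-u) := by positivity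
    have h6 := mul_le_mul_of_nonneg_left h4 hpos.le
    have h5 : Real.exp u * ((1+u) * Real.exp (-u)) = 1 + u := by
      rw [mul_comm ((1:ℝ)+u) (Real.exp (-u)), ← mul_assoc, hprod, one_mul]
    rw [h5] at h6
    nlinarith

/-- L3' : 2 log w ≤ w - 1/w for w ≥ 1 -/
private lemma L3' {w : ℝ} (hw : 1 ≤ w) : 2 * Real.log w ≤ w - 1/w := by
  have key := nonneg_on_Ici 1 (fun s => s - s⁻¹ - 2 * Real.log s)
      (fun s => 1 + (s^2)⁻¹ - 2 * s⁻¹) ?_ (by norm_num) ?_ w hw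
  · rw [one_div]; linarith
  · intro s hs
    have hs0 : s ≠ 0 := by intro h; rw [h] at hs; linarith
    have h1 : HasDerivAt (fun u : ℝ => u - u⁻¹ - 2 * Real.log u)
        ((1 - -(s^2)⁻¹) - 2 * s⁻¹) s :=
      ((hasDerivAt_id s).sub (hasDerivAt_inv hs0)).sub ((Real.hasDerivAt_log hs0).const_mul 2)
    convert h1 using 1; ring
  · intro s hs
    have hs0 : (0:ℝ) < s := by linarith
    have e : (s^2)⁻¹ = s⁻¹ * s⁻¹ := by rw [sq, mul_inv]
    nlinarith [sq_nonneg (1 - s⁻¹)]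

/-- L3 : y (log y)² ≤ (y-1)² for y ≥ 1 -/
private lemma L3 {y : ℝ} (hy : 1 ≤ y) : y * (Real.log y)^2 ≤ (y-1)^2 := by
  have hy0 : (0:ℝ) < y := by linarith
  set w := Real.sqrt y with hw
  have hw1 : 1 ≤ w := by
    rw [hw, show (1:ℝ) = Real.sqrt 1 by simp]
    exact Real.sqrt_le_sqrt hy
  have hwsq : w^2 = y := Real.sq_sqrt hy0.le
  have hlog : Real.log y = 2 * Real.log w := by
    rw [← hwsq, Real.log_pow]; push_cast; ring
  have h2 := L3' hw1
  have hw0 : (0:ℝ) < w := by linarith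
  -- w * (2 log w) ≤ w^2 - 1
  have h3 : w * (2 * Real.log w) ≤ y - 1 := by
    have := mul_le_mul_of_nonneg_left h2 hw0.le
    rw [← hwsq]
    calc w * (2*Real.log w) ≤ w * (w - 1/w) := this
    _ = w^2 - 1 := by field_simp
  have hlw : 0 ≤ Real.log w := Real.log_nonneg hw1
  have h4 : 0 ≤ w * (2 * Real.log w) := by positivity
  calc y * (Real.log y)^2 = (w * (2 * Real.log w))^2 := by
        rw [hlog, ← hwsq]; ring
  _ ≤ (y-1)^2 := by nlinarith


/-- KEY1 : pointwise inequality for 0 < r ≤ 1 -/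
private lemma KEY1 {r m x A : ℝ} (hr0 : 0 < r) (hr1 : r ≤ 1) (hm : 0 < m)
    (hmx : m ≤ x) (hmA : m ≤ A) :
    A/r * ((x/A)^r - 1 - r * Real.log (x/A)) ≤ r/(2*m) * (x - A)^2 := by
  have hA : 0 < A := lt_of_lt_of_le hm hmA
  have hx0 : 0 < x := lt_of_lt_of_le hm hmx
  set θ : ℝ := x/A with hθ
  have hθpos : 0 < θ := by positivity
  have hxA : x = A * θ := by rw [hθ]; field_simp
  rcases le_total A x with hcase | hcase
  · -- θ ≥ 1
    have hθ1 : 1 ≤ θ := (one_le_div hA).mpr hcase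
    set u : ℝ := r * Real.log θ with hu_def
    have hu : 0 ≤ u := mul_nonneg hr0.le (Real.log_nonneg hθ1)
    have e1 : θ ^ r = Real.exp u := by
      rw [Real.rpow_def_of_pos hθpos, mul_comm]
    have l1 := L1 hu
    have h2 : θ ^ r ≤ θ := by
      calc θ ^ r ≤ θ ^ (1:ℝ) := Real.rpow_le_rpow_of_exponent_le hθ1 hr1
      _ = θ := Real.rpow_one θ
    have h3 := L3 hθ1
    have step1 : θ^r - 1 - r * Real.log θ ≤ u^2/2 * θ^r := by
      rw [e1]; rw [hu_def] at l1 ⊢; linarith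
    have step2 : u^2/2 * θ^r ≤ u^2/2 * θ := by
      apply mul_le_mul_of_nonneg_left h2 (by positivity)
    have hL : A/r * (θ^r - 1 - r * Real.log θ) ≤ A*r/2 * (θ * (Real.log θ)^2) := by
      have hAr : 0 < A/r := by positivity
      calc A/r * (θ^r - 1 - r * Real.log θ) ≤ A/r * (u^2/2 * θ) := by
            apply mul_le_mul_of_nonneg_left (le_trans step1 step2) hAr.le
      _ = A*r/2 * (θ * (Real.log θ)^2) := by
            rw [hu_def]; field_simp
    have hR : A*r/2 * (θ * (Real.log θ)^2) ≤ A*r/2*(θ-1)^2 :=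
      mul_le_mul_of_nonneg_left h3 (by positivity)
    have hfin : A*r/2*(θ-1)^2 ≤ r/(2*m) * (x - A)^2 := by
      have hxa2 : (x - A)^2 = A^2*(θ-1)^2 := by rw [hxA]; ring
      rw [hxa2]
      have e2 : r/(2*m) * (A^2*(θ-1)^2) = (A*r/2) * (A/m) * (θ-1)^2 := by
        field_simp
      rw [e2]
      have h5 : 1 ≤ A/m := (one_le_div hm).mpr hmA
      nlinarith [sq_nonneg (θ-1), mul_nonneg (mul_nonneg hA.le hr0.le) (sq_nonneg (θ-1))]
    rw [hu_def]
    linarith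
  · -- θ ≤ 1
    set y : ℝ := A/x with hy_def
    have hy1 : 1 ≤ y := (one_le_div hx0).mpr hcase
    have hy0 : 0 < y := by positivity
    have hθy : θ = 1/y := by rw [hθ, hy_def]; field_simp
    have hlog : Real.log θ = -Real.log y := by
      rw [hθy, one_div, Real.log_inv]
    set v : ℝ := r * Real.log y with hv_def
    have hv : 0 ≤ v := mul_nonneg hr0.le (Real.log_nonneg hy1)
    have e1 : θ ^ r = Real.exp (-v) := by
      rw [Real.rpow_def_of_pos hθpos, hlog, hv_def]; ring_nf
    have l2 := L2 hv
    have step1 : θ^r - 1 - r * Real.log θ ≤ v^2/2 := by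
      rw [e1, hlog]; rw [hv_def] at l2 ⊢; linarith
    have h3 := L3 hy1
    -- (log y)^2 ≤ (y-1)^2/y
    have h4 : (Real.log y)^2 ≤ (y-1)^2/y := by
      rw [le_div_iff₀ hy0]; nlinarith
    have hL : A/r * (θ^r - 1 - r * Real.log θ) ≤ A*r/2 * ((y-1)^2/y) := by
      have hAr : (0:ℝ) < A/r := by positivity
      calc A/r * (θ^r - 1 - r * Real.log θ) ≤ A/r * (v^2/2) :=
            mul_le_mul_of_nonneg_left step1 hAr.le
      _ = A*r/2 * (Real.log y)^2 := by rw [hv_def]; field_simp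
      _ ≤ A*r/2 * ((y-1)^2/y) := mul_le_mul_of_nonneg_left h4 (by positivity)
    have hfin : A*r/2 * ((y-1)^2/y) ≤ r/(2*m) * (x - A)^2 := by
      have e2 : A*r/2 * ((y-1)^2/y) = r/(2*x) * (x-A)^2 := by
        rw [hy_def]; field_simp; ring
      rw [e2]
      have h6 : r/(2*x) ≤ r/(2*m) := by
        apply div_le_div_of_nonneg_left hr0.le (by linarith) (by linarith)
      exact mul_le_mul_of_nonneg_right h6 (sq_nonneg _)
    linarith


/-- T2 : concave tangent line for rpow, exponent in [0,1] -/
private lemma T2 {s a b : ℝ} (hs0 : 0 ≤ s) (hs1 : s ≤ 1) (ha : 0 < a) (hb : 0 ≤ b) :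
    b ^ s ≤ a ^ s + s * a ^ (s-1) * (b - a) := by
  have h0 : -1 ≤ b/a - 1 := by
    have : 0 ≤ b/a := by positivity
    linarith
  have hbern := rpow_one_add_le_one_add_mul_self h0 hs0 hs1
  have e1 : (1 : ℝ) + (b/a - 1) = b/a := by ring
  rw [e1] at hbern
  have e2 : (b/a) ^ s = b^s / a^s := Real.div_rpow hb ha.le s
  rw [e2] at hbern
  have has : 0 < a^s := Real.rpow_pos_of_pos ha s
  have := (div_le_iff₀ has).mp hbern
  calc b^s ≤ (1 + s*(b/a - 1)) * a^s := this
  _ = a^s + s * (a^s/a) * (b - a) := by field_simp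
  _ = a^s + s * a^(s-1) * (b - a) := by rw [← Real.rpow_sub_one ha.ne' s]

/-- base comparison for nonpositive exponents -/
private lemma base_le {m A c : ℝ} (hm : 0 < m) (hmA : m ≤ A) (hc : c ≤ 0) :
    A ^ c ≤ m ^ c := Real.rpow_le_rpow_of_nonpos hm hmA hc

/-- KEY3 : pointwise Taylor-type inequality for 1 ≤ r ≤ 2 -/
private lemma KEY3 {r m A : ℝ} (hr1 : 1 ≤ r) (hr2 : r ≤ 2) (hm : 0 < m) (hmA : m ≤ A) :
    ∀ x, m ≤ x → x ^ r ≤ A^r + r * A^(r-1) * (x - A) + (r*(r-1)/2) * m^(r-2) * (x-A)^2 := by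
  have hA : 0 < A := lt_of_lt_of_le hm hmA
  -- φ x = RHS - LHS, φ A = 0, monotone on [A,∞), antitone on [m,A]
  set φ : ℝ → ℝ := fun t =>
    A^r + r * A^(r-1) * (t - A) + (r*(r-1)/2) * m^(r-2) * (t-A)^2 - t^r with hφ
  set φ' : ℝ → ℝ := fun t =>
    r * A^(r-1) + (r*(r-1)) * m^(r-2) * (t-A) - r * t^(r-1) with hφ'
  have hd : ∀ t, 0 < t → HasDerivAt φ (φ' t) t := by
    intro t ht
    have h1 : HasDerivAt (fun u : ℝ => u ^ r) (r * t^(r-1)) t :=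
      Real.hasDerivAt_rpow_const (Or.inl ht.ne')
    have h2 : HasDerivAt (fun u : ℝ =>
        A^r + r * A^(r-1) * (u - A) + (r*(r-1)/2) * m^(r-2) * (u-A)^2)
        (r * A^(r-1) + (r*(r-1)/2) * m^(r-2) * (2*(t-A))) t := by
      have ha1 : HasDerivAt (fun u : ℝ => u - A) 1 t := (hasDerivAt_id t).sub_const A
      have ha2 : HasDerivAt (fun u : ℝ => (u - A)^2) (2*(t-A)) t := by
        have := ha1.pow 2
        exact this.congr_deriv (by ring)
      have ha3 : HasDerivAt (fun u : ℝ => r * A^(r-1) * (u - A)) (r * A^(r-1)) t := by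
        simpa using ha1.const_mul (r * A^(r-1))
      have ha4 : HasDerivAt (fun u : ℝ => (r*(r-1)/2) * m^(r-2) * (u-A)^2)
          ((r*(r-1)/2) * m^(r-2) * (2*(t-A))) t := ha2.const_mul _
      exact (((hasDerivAt_const t (A^r : ℝ)).add ha3).add ha4).congr_deriv (by ring)
    have := h2.sub h1
    exact this.congr_deriv (by simp only [hφ']; ring)
  -- tangent bound : for t ≥ m, s := r - 1 ∈ [0,1] : |t^(r-1) - A^(r-1)| ≤ (r-1) m^(r-2)|t - A|
  have hs0 : (0:ℝ) ≤ r - 1 := by linarith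
  have hs1 : r - 1 ≤ 1 := by linarith
  have key_right : ∀ t, A ≤ t → 0 ≤ φ' t := by
    intro t htA
    have ht0 : 0 < t := lt_of_lt_of_le hA htA
    have h1 : t^(r-1) ≤ A^(r-1) + (r-1) * A^(r-1-1) * (t - A) := T2 hs0 hs1 hA ht0.le
    have h2 : A^(r-1-1) ≤ m^(r-2) := by
      have : r - 1 - 1 = r - 2 := by ring
      rw [this]
      exact base_le hm hmA (by linarith)
    have h3 : (r-1) * A^(r-1-1) * (t-A) ≤ (r-1) * m^(r-2) * (t-A) := by
      apply mul_le_mul_of_nonneg_right _ (by linarith)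
      exact mul_le_mul_of_nonneg_left h2 hs0
    simp only [hφ']
    have h4 : t^(r-1) ≤ A^(r-1) + (r-1) * m^(r-2) * (t-A) := by linarith
    have h5 := mul_le_mul_of_nonneg_left h4 (by linarith : (0:ℝ) ≤ r)
    linarith [h5]
  have key_left : ∀ t, m ≤ t → t ≤ A → φ' t ≤ 0 := by
    intro t htm htA
    have ht0 : 0 < t := lt_of_lt_of_le hm htm
    have h1 : A^(r-1) ≤ t^(r-1) + (r-1) * t^(r-1-1) * (A - t) := T2 hs0 hs1 ht0 hA.le
    have h2 : t^(r-1-1) ≤ m^(r-2) := by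
      have e : r - 1 - 1 = r - 2 := by ring
      rw [e]
      exact base_le hm htm (by linarith)
    have h3 : (r-1) * t^(r-1-1) * (A-t) ≤ (r-1) * m^(r-2) * (A-t) := by
      apply mul_le_mul_of_nonneg_right _ (by linarith)
      exact mul_le_mul_of_nonneg_left h2 hs0
    simp only [hφ']
    have h4 : A^(r-1) ≤ t^(r-1) + (r-1) * m^(r-2) * (A-t) := by linarith
    have h5 := mul_le_mul_of_nonneg_left h4 (by linarith : (0:ℝ) ≤ r)
    linarith [h5]
  have hφA : φ A = 0 := by rw [hφ]; simp
  -- conclude φ ≥ 0 on [m, ∞)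
  intro x hx
  have hx0 : 0 < x := lt_of_lt_of_le hm hx
  have hnn : 0 ≤ φ x := by
    rcases le_total A x with hcase | hcase
    · have := nonneg_on_Ici A φ φ' (fun t ht => hd t (lt_of_lt_of_le hA ht)) hφA
        (fun t ht => key_right t ht.le) x hcase
      exact this
    · -- antitone on [m, A]
      have hanti : AntitoneOn φ (Set.Icc m A) := by
        apply antitoneOn_of_deriv_nonpos (convex_Icc m A)
        · intro s hs
          exact (hd s (lt_of_lt_of_le hm hs.1)).continuousAt.continuousWithinAt
        · intro s hs
          rw [interior_Icc] at hs
          exact (hd s (lt_of_lt_of_le hm hs.1.le)).differentiableAt.differentiableWithinAt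
        · intro s hs
          rw [interior_Icc] at hs
          rw [(hd s (lt_of_lt_of_le hm hs.1.le)).deriv]
          exact key_left s hs.1.le hs.2.le
      have := hanti (Set.mem_Icc.mpr ⟨hx, hcase⟩) (Set.mem_Icc.mpr ⟨hmA, le_refl A⟩) hcase
      rw [hφA] at this
      exact this
  rw [hφ] at hnn
  dsimp only at hnn
  linarith




private theorem case_le_one (n : ℕ) (x q : Fin (n + 1) → ℝ)
    (hx : ∀ i, 0 < x i) (hq : ∀ i, 0 < q i) (hsum : ∑ i, q i = 1)
    (r : ℝ) (hr1 : 0 < r) (hr2 : r ≤ 1)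
    (A : ℝ) (hA : A = ∑ i, q i * x i)
    (σ : ℝ) (hσ : σ = ∑ i, q i * (x i - A) ^ 2)
    (xmin : ℝ) (hm_pos : 0 < xmin) (hm_le : ∀ i, xmin ≤ x i) (hmA : xmin ≤ A) :
    (∑ i, q i * x i ^ r) ^ (1 / r) - ∏ i, x i ^ q i
      ≤ r / (2 * xmin) * σ := by
  have hA_pos : 0 < A := lt_of_lt_of_le hm_pos hmA
  set θ : Fin (n+1) → ℝ := fun i => x i / A with hθ
  have hθpos : ∀ i, 0 < θ i := fun i => div_pos (hx i) hA_pos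
  set L : ℝ := ∑ i, q i * Real.log (θ i) with hL
  set β : ℝ := ∑ i, q i * θ i ^ r with hβ
  have hθsum : ∑ i, q i * θ i = 1 := by
    rw [hθ]
    have : ∀ i, q i * (x i / A) = (q i * x i)/A := fun i => by ring
    rw [Finset.sum_congr rfl (fun i _ => this i), ← Finset.sum_div, ← hA,
      div_self hA_pos.ne']
  -- G = A * exp L
  have hG : (∏ i, x i ^ q i) = A * Real.exp L := by
    have h1 : (∏ i, x i ^ q i) = Real.exp (∑ i, Real.log (x i) * q i) := by
      rw [Real.exp_sum]
      exact Finset.prod_congr rfl fun i _ => Real.rpow_def_of_pos (hx i) (q i)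
    have h2 : L = ∑ i, Real.log (x i) * q i - Real.log A := by
      rw [hL]
      have : ∀ i, q i * Real.log (θ i) = Real.log (x i) * q i - Real.log A * q i := by
        intro i
        rw [hθ]
        rw [Real.log_div (hx i).ne' hA_pos.ne']
        ring
      rw [Finset.sum_congr rfl (fun i _ => this i), Finset.sum_sub_distrib,
        ← Finset.mul_sum, hsum, mul_one]
    rw [h1, h2]
    rw [Real.exp_sub, Real.exp_log hA_pos]
    field_simp
  -- M = A * β^(1/r)
  have hM : (∑ i, q i * x i ^ r) ^ (1/r) = A * β ^ (1/r) := by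
    have h1 : ∑ i, q i * x i ^ r = A^r * β := by
      rw [hβ, Finset.mul_sum]
      apply Finset.sum_congr rfl
      intro i _
      rw [hθ]
      rw [Real.div_rpow (hx i).le hA_pos.le]
      field_simp [(Real.rpow_pos_of_pos hA_pos r).ne']
    rw [h1, Real.mul_rpow (Real.rpow_pos_of_pos hA_pos r).le
      (Finset.sum_nonneg fun i _ => mul_nonneg (hq i).le (Real.rpow_nonneg (hθpos i).le r))]
    congr 1
    rw [← Real.rpow_mul hA_pos.le, mul_one_div, div_self hr1.ne', Real.rpow_one]
  -- β ≤ 1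
  have hβnn : ∀ i, 0 ≤ q i * θ i ^ r := fun i =>
    mul_nonneg (hq i).le (Real.rpow_nonneg (hθpos i).le r)
  have hβpos : 0 < β := by
    rw [hβ]
    apply Finset.sum_pos (fun i _ => mul_pos (hq i) (Real.rpow_pos_of_pos (hθpos i) r))
    exact Finset.univ_nonempty
  have hβ1 : β ≤ 1 := by
    have hpt : ∀ i, q i * θ i ^ r ≤ q i * (1 + r * (θ i - 1)) := by
      intro i
      apply mul_le_mul_of_nonneg_left _ (hq i).le
      have := T2 hr1.le hr2 one_pos (hθpos i).le
      simpa using this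
    calc β ≤ ∑ i, q i * (1 + r * (θ i - 1)) := Finset.sum_le_sum fun i _ => hpt i
    _ = 1 := by
      have : ∀ i, q i * (1 + r * (θ i - 1)) = q i + r * (q i * θ i) - r * q i := by
        intro i; ring
      rw [Finset.sum_congr rfl (fun i _ => this i)]
      rw [Finset.sum_sub_distrib, Finset.sum_add_distrib, ← Finset.mul_sum,
        ← Finset.mul_sum, hsum, hθsum]
      ring
  -- AM-GM : exp (r*L) ≤ β
  have hAMGM : Real.exp (r * L) ≤ β := by
    have hgm := Real.geom_mean_le_arith_mean_weighted Finset.univ q (fun i => θ i ^ r)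
      (fun i _ => (hq i).le) hsum (fun i _ => (Real.rpow_nonneg (hθpos i).le r))
    have : (∏ i, (θ i ^ r) ^ q i) = Real.exp (r * L) := by
      rw [hL, Finset.mul_sum, Real.exp_sum]
      apply Finset.prod_congr rfl
      intro i _
      rw [Real.rpow_def_of_pos (Real.rpow_pos_of_pos (hθpos i) r),
        Real.log_rpow (hθpos i)]
      ring_nf
    rw [← this]
    exact hgm
  -- Bernoulli step : β^(1/r) - exp L ≤ (β - exp (r*L))/r
  have h1r : (1:ℝ) ≤ 1/r := by rw [le_div_iff₀ hr1]; linarith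
  have hstep : β ^ (1/r) ≤ Real.exp L + (β - Real.exp (r*L))/r := by
    set v : ℝ := Real.exp (r*L) with hv
    have hv0 : 0 < v := Real.exp_pos _
    have hvβ : v ≤ β := hAMGM
    have hvp : v ^ (1/r) = Real.exp L := by
      rw [hv, Real.rpow_def_of_pos (Real.exp_pos _), Real.log_exp]
      congr 1
      field_simp
    have hbern := one_add_mul_self_le_rpow_one_add
      (show (-1:ℝ) ≤ v/β - 1 by
        have : 0 ≤ v/β := by positivity
        linarith) h1r
    have e1 : (1:ℝ) + (v/β - 1) = v/β := by ring
    rw [e1] at hbern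
    rw [Real.div_rpow hv0.le hβpos.le] at hbern
    have hβp : 0 < β ^ (1/r) := Real.rpow_pos_of_pos hβpos _
    have h6 := (le_div_iff₀ hβp).mp hbern
    have h7 : β^(1/r) - v^(1/r) ≤ (1/r) * (1 - v/β) * β^(1/r) := by nlinarith [h6]
    have hββ : β^(1/r) ≤ β := by
      calc β^(1/r) ≤ β^(1:ℝ) := Real.rpow_le_rpow_of_exponent_ge hβpos hβ1 h1r
      _ = β := Real.rpow_one β
    have h9 : (1/r) * (1 - v/β) * β^(1/r) ≤ (1/r) * (β - v) := by
      have e : (1:ℝ) - v/β = (β - v)/β := by field_simp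
      rw [e]
      have hfac : 0 ≤ (1/r)*(β - v) := by
        apply mul_nonneg (by positivity)
        linarith
      calc (1/r)*((β-v)/β)*β^(1/r) = ((1/r)*(β-v)) * (β^(1/r)/β) := by ring
      _ ≤ ((1/r)*(β-v)) * 1 := by
          apply mul_le_mul_of_nonneg_left _ hfac
          rw [div_le_one hβpos]
          exact hββ
      _ = (1/r)*(β-v) := mul_one _
    rw [hvp] at h7
    have : (1/r) * (β - v) = (β - v)/r := by ring
    linarith [this ▸ h9]
  -- assemble
  rw [hM, hG]
  have c1 : A * β^(1/r) - A * Real.exp L ≤ A/r * (β - 1 - r*L) := by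
    have h0 := mul_le_mul_of_nonneg_left hstep hA_pos.le
    have hβv : β - Real.exp (r*L) ≤ β - 1 - r*L := by
      linarith [Real.add_one_le_exp (r*L)]
    have h2 : A * ((β - Real.exp (r*L))/r) ≤ A/r * (β - 1 - r*L) := by
      calc A * ((β - Real.exp (r*L))/r) = A/r * (β - Real.exp (r*L)) := by ring
      _ ≤ A/r * (β - 1 - r*L) := mul_le_mul_of_nonneg_left hβv (by positivity)
    nlinarith [h0, h2]
  have c2 : A/r * (β - 1 - r*L) = ∑ i, q i * (A/r * (θ i^r - 1 - r * Real.log (θ i))) := by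
    have e : ∀ i, q i * (A/r * (θ i^r - 1 - r * Real.log (θ i)))
        = A/r * (q i * θ i^r - q i - r*(q i * Real.log (θ i))) := fun i => by ring
    rw [Finset.sum_congr rfl (fun i _ => e i), ← Finset.mul_sum]
    congr 1
    rw [Finset.sum_sub_distrib, Finset.sum_sub_distrib, hsum, ← Finset.mul_sum]
  have c3 : ∀ i, q i * (A/r * (θ i^r - 1 - r*Real.log (θ i)))
      ≤ q i * (r/(2*xmin) * (x i - A)^2) := by
    intro i
    apply mul_le_mul_of_nonneg_left _ (hq i).le
    have hk := KEY1 hr1 hr2 hm_pos (hm_le i) hmA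
    simp only [hθ]
    exact hk
  calc A*β^(1/r) - A*Real.exp L ≤ A/r * (β - 1 - r*L) := c1
  _ = ∑ i, q i * (A/r * (θ i^r - 1 - r * Real.log (θ i))) := c2
  _ ≤ ∑ i, q i * (r/(2*xmin)*(x i - A)^2) := Finset.sum_le_sum (fun i _ => c3 i)
  _ = r/(2*xmin) * σ := by
      rw [hσ, Finset.mul_sum]
      exact Finset.sum_congr rfl fun i _ => by ring


private theorem case_ge_one (n : ℕ) (x q : Fin (n + 1) → ℝ)
    (hx : ∀ i, 0 < x i) (hq : ∀ i, 0 < q i) (hsum : ∑ i, q i = 1)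
    (r : ℝ) (hr1 : 1 ≤ r) (hr2 : r ≤ 2)
    (A : ℝ) (hA : A = ∑ i, q i * x i)
    (σ : ℝ) (hσ : σ = ∑ i, q i * (x i - A) ^ 2)
    (xmin : ℝ) (hm_pos : 0 < xmin) (hm_le : ∀ i, xmin ≤ x i) (hmA : xmin ≤ A) :
    (∑ i, q i * x i ^ r) ^ (1 / r) - ∏ i, x i ^ q i
      ≤ r / (2 * xmin) * σ := by
  have hA_pos : 0 < A := lt_of_lt_of_le hm_pos hmA
  have hr0 : (0:ℝ) < r := lt_of_lt_of_le one_pos hr1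
  have hσnn : 0 ≤ σ := by
    rw [hσ]; exact Finset.sum_nonneg fun i _ => mul_nonneg (hq i).le (sq_nonneg _)
  set θ : Fin (n+1) → ℝ := fun i => x i / A with hθ
  have hθpos : ∀ i, 0 < θ i := fun i => div_pos (hx i) hA_pos
  set L : ℝ := ∑ i, q i * Real.log (θ i) with hL
  have hθsum : ∑ i, q i * θ i = 1 := by
    rw [hθ]
    have : ∀ i, q i * (x i / A) = (q i * x i)/A := fun i => by ring
    rw [Finset.sum_congr rfl (fun i _ => this i), ← Finset.sum_div, ← hA,
      div_self hA_pos.ne']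
  have hG : (∏ i, x i ^ q i) = A * Real.exp L := by
    have h1 : (∏ i, x i ^ q i) = Real.exp (∑ i, Real.log (x i) * q i) := by
      rw [Real.exp_sum]
      exact Finset.prod_congr rfl fun i _ => Real.rpow_def_of_pos (hx i) (q i)
    have h2 : L = ∑ i, Real.log (x i) * q i - Real.log A := by
      rw [hL]
      have : ∀ i, q i * Real.log (θ i) = Real.log (x i) * q i - Real.log A * q i := by
        intro i
        rw [hθ]
        rw [Real.log_div (hx i).ne' hA_pos.ne']
        ring
      rw [Finset.sum_congr rfl (fun i _ => this i), Finset.sum_sub_distrib,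
        ← Finset.mul_sum, hsum, mul_one]
    rw [h1, h2]
    rw [Real.exp_sub, Real.exp_log hA_pos]
    field_simp
  -- Cartwright-Field : A - G ≤ σ/(2 xmin)
  have hCF : A - A * Real.exp L ≤ 1/(2*xmin) * σ := by
    have hexp := Real.add_one_le_exp L
    have c0 : A - A * Real.exp L ≤ A * (0 - L) := by nlinarith [hA_pos]
    have c1 : A * (0 - L) = ∑ i, q i * (A * (θ i - 1 - Real.log (θ i))) := by
      have e : ∀ i, q i * (A * (θ i - 1 - Real.log (θ i)))
          = A * (q i * θ i - q i - q i * Real.log (θ i)) := fun i => by ring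
      rw [Finset.sum_congr rfl (fun i _ => e i), ← Finset.mul_sum]
      congr 1
      rw [Finset.sum_sub_distrib, Finset.sum_sub_distrib, hθsum, hsum, ← hL]
      ring
    have c3 : ∀ i, q i * (A * (θ i - 1 - Real.log (θ i)))
        ≤ q i * (1/(2*xmin) * (x i - A)^2) := by
      intro i
      apply mul_le_mul_of_nonneg_left _ (hq i).le
      have hk := KEY1 one_pos (le_refl (1:ℝ)) hm_pos (hm_le i) hmA
      rw [Real.rpow_one] at hk
      simp only [hθ]
      calc A * (x i/A - 1 - Real.log (x i/A))
          = A/1 * (x i/A - 1 - 1 * Real.log (x i/A)) := by ring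
      _ ≤ 1/(2*xmin) * (x i - A)^2 := hk
    calc A - A * Real.exp L ≤ A * (0 - L) := c0
    _ = ∑ i, q i * (A * (θ i - 1 - Real.log (θ i))) := c1
    _ ≤ ∑ i, q i * (1/(2*xmin) * (x i - A)^2) := Finset.sum_le_sum fun i _ => c3 i
    _ = 1/(2*xmin) * σ := by
        rw [hσ, Finset.mul_sum]
        exact Finset.sum_congr rfl fun i _ => by ring
  -- power mean part : M ≤ A + (r-1)/(2 xmin) * σ
  set c : ℝ := r*(r-1)/2 * xmin^(r-2) with hc
  have hc0 : 0 ≤ c := by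
    rw [hc]
    apply mul_nonneg _ (Real.rpow_pos_of_pos hm_pos _).le
    nlinarith
  have hD0 : 0 ≤ c * σ := mul_nonneg hc0 hσnn
  have h1 : ∑ i, q i * x i ^ r ≤ A^r + c * σ := by
    have hzero : ∑ i, q i * (x i - A) = 0 := by
      have e : ∀ i, q i * (x i - A) = q i * x i - q i * A := fun i => by ring
      rw [Finset.sum_congr rfl (fun i _ => e i), Finset.sum_sub_distrib, ← hA,
        ← Finset.sum_mul, hsum]
      ring
    calc ∑ i, q i * x i ^ r
        ≤ ∑ i, q i * (A^r + r*A^(r-1)*(x i - A) + c*(x i - A)^2) := by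
          apply Finset.sum_le_sum
          intro i _
          apply mul_le_mul_of_nonneg_left _ (hq i).le
          rw [hc]
          exact KEY3 hr1 hr2 hm_pos hmA (x i) (hm_le i)
    _ = A^r + c * σ := by
        have e : ∀ i, q i * (A^r + r*A^(r-1)*(x i - A) + c*(x i - A)^2)
            = q i * A^r + (r*A^(r-1))*(q i * (x i - A)) + c*(q i*(x i - A)^2) :=
          fun i => by ring
        rw [Finset.sum_congr rfl (fun i _ => e i), Finset.sum_add_distrib,
          Finset.sum_add_distrib, ← Finset.sum_mul, hsum, ← Finset.mul_sum, hzero,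
          ← Finset.mul_sum, ← hσ]
        ring
  have hsum_nn : 0 ≤ ∑ i, q i * x i ^ r :=
    Finset.sum_nonneg fun i _ => mul_nonneg (hq i).le (Real.rpow_nonneg (hx i).le r)
  have h2 : (∑ i, q i * x i ^ r)^(1/r) ≤ (A^r + c*σ)^(1/r) :=
    Real.rpow_le_rpow hsum_nn h1 (by positivity)
  have hArp : 0 < A^r := Real.rpow_pos_of_pos hA_pos r
  have h3 : (A^r + c*σ)^(1/r) ≤ A + 1/r * A^(1-r) * (c*σ) := by
    have ht0 : 0 ≤ c*σ/A^r := by positivity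
    have e : A^r + c*σ = A^r * (1 + c*σ/A^r) := by field_simp
    rw [e, Real.mul_rpow hArp.le (by linarith)]
    have e2 : (A^r)^(1/r) = A := by
      rw [← Real.rpow_mul hA_pos.le, mul_one_div, div_self hr0.ne', Real.rpow_one]
    rw [e2]
    have hb := T2 (show (0:ℝ) ≤ 1/r by positivity)
      (show 1/r ≤ 1 by rw [div_le_one hr0]; linarith) one_pos
      (show (0:ℝ) ≤ 1 + c*σ/A^r by linarith)
    simp only [Real.one_rpow, add_sub_cancel_left, mul_one] at hb
    have hb' : (1 + c*σ/A^r)^(1/r) ≤ 1 + 1/r * (c*σ/A^r) := by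
      calc (1 + c*σ/A^r)^(1/r) ≤ 1 + 1/r * 1^(1/r-1) * (c*σ/A^r) := by
            have := T2 (show (0:ℝ) ≤ 1/r by positivity)
              (show 1/r ≤ 1 by rw [div_le_one hr0]; linarith) one_pos
              (show (0:ℝ) ≤ 1 + c*σ/A^r by linarith)
            simpa using this
      _ = 1 + 1/r * (c*σ/A^r) := by rw [Real.one_rpow, mul_one]
    calc A * (1 + c*σ/A^r)^(1/r) ≤ A * (1 + 1/r * (c*σ/A^r)) :=
          mul_le_mul_of_nonneg_left hb' hA_pos.le
    _ = A + 1/r * A^(1-r) * (c*σ) := by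
        rw [Real.rpow_sub hA_pos, Real.rpow_one]
        field_simp
  have h4 : 1/r * A^(1-r) * (c*σ) ≤ 1/r * xmin^(1-r) * (c*σ) := by
    apply mul_le_mul_of_nonneg_right _ hD0
    apply mul_le_mul_of_nonneg_left (base_le hm_pos hmA (by linarith)) (by positivity)
  have h6 : 1/r * xmin^(1-r) * (c*σ) = (r-1)/(2*xmin) * σ := by
    rw [hc]
    have hxm : xmin^(r-2) * xmin^(1-r) = xmin⁻¹ := by
      rw [← Real.rpow_add hm_pos, show (r-2)+(1-r) = (-1:ℝ) by ring,
        Real.rpow_neg_one]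
    calc 1/r * xmin^(1-r) * (r*(r-1)/2 * xmin^(r-2) * σ)
        = (1/r*(r*(r-1)/2)) * ((xmin^(r-2) * xmin^(1-r)) * σ) := by ring
    _ = (1/r*(r*(r-1)/2)) * (xmin⁻¹ * σ) := by rw [hxm]
    _ = (r-1)/(2*xmin) * σ := by field_simp
  -- assemble
  have hM_le : (∑ i, q i * x i ^ r)^(1/r) ≤ A + (r-1)/(2*xmin) * σ := by
    calc (∑ i, q i * x i ^ r)^(1/r) ≤ (A^r + c*σ)^(1/r) := h2
    _ ≤ A + 1/r * A^(1-r) * (c*σ) := h3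
    _ ≤ A + 1/r * xmin^(1-r) * (c*σ) := by linarith
    _ = A + (r-1)/(2*xmin) * σ := by rw [h6]
  rw [hG]
  have efin : (r-1)/(2*xmin) * σ + 1/(2*xmin) * σ = r/(2*xmin) * σ := by
    field_simp
    ring
  linarith


/-- For `0 < r ≤ 2`: `M_{n,r} - G_n ≤ (r/(2 x_min)) σ_n`. -/
theorem stmt3 (n : ℕ) (x q : Fin (n + 1) → ℝ)
    (hx : ∀ i, 0 < x i) (hq : ∀ i, 0 < q i) (hsum : ∑ i, q i = 1)
    (r : ℝ) (hr1 : 0 < r) (hr2 : r ≤ 2)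
    (A : ℝ) (hA : A = ∑ i, q i * x i)
    (σ : ℝ) (hσ : σ = ∑ i, q i * (x i - A) ^ 2)
    (xmin : ℝ) (hxmin : xmin = Finset.univ.inf' Finset.univ_nonempty x) :
    (∑ i, q i * x i ^ r) ^ (1 / r) - ∏ i, x i ^ q i
      ≤ r / (2 * xmin) * σ := by
  have hm_le : ∀ i, xmin ≤ x i := by
    intro i
    rw [hxmin]
    exact Finset.inf'_le x (Finset.mem_univ i)
  have hm_pos : 0 < xmin := by
    obtain ⟨i0, -, hi0⟩ := Finset.exists_mem_eq_inf' (Finset.univ_nonempty) x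
    rw [hxmin, hi0]
    exact hx i0
  have hmA : xmin ≤ A := by
    rw [hA]
    calc xmin = ∑ i, q i * xmin := by
          rw [← Finset.sum_mul, hsum, one_mul]
    _ ≤ ∑ i, q i * x i :=
        Finset.sum_le_sum fun i _ => mul_le_mul_of_nonneg_left (hm_le i) (hq i).le
  rcases le_total r 1 with h | h
  · exact case_le_one n x q hx hq hsum r hr1 h A hA σ hσ xmin hm_pos hm_le hmA
  · exact case_ge_one n x q hx hq hsum r h hr2 A hA σ hσ xmin hm_pos hm_le hmA
end

section
/- If $r > 2$, then the inequality $M_{n,r} - G_n \le \frac{r}{2 x_1} \sigma_n$ fails in general: there exist $n$, positive $x_i$, and positive weights $q_i$ summing to $1$ for which the inequality is violated. (Specifically, for $n=2$, $x_1 = 1 < x_2 = x$, weights $(q, 1-q)$ with $q \to 0^+$, the limit $\lim_{q\to 0^+} (M_{2,r} - G_2 - \frac{r}{2}\sigma_2)/q = \frac{x^r - 1}{r} - \ln x - \frac{r}{2}(x-1)^2$ becomes positive for large $x$ when $r > 2$.) -/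
open Real Filter

/-- For `r > 2`, the inequality `M_{n,r} - G_n ≤ (r/(2 x_min)) σ_n` fails in general. -/
theorem stmt5 (r : ℝ) (hr : 2 < r) :
    ∃ (n : ℕ) (x q : Fin (n + 1) → ℝ),
      (∀ i, 0 < x i) ∧ (∀ i, 0 < q i) ∧ (∑ i, q i = 1) ∧
      r / (2 * Finset.univ.inf' Finset.univ_nonempty x) *
          (∑ i, q i * (x i - ∑ j, q j * x j) ^ 2)
        < (∑ i, q i * x i ^ r) ^ (1 / r) - ∏ i, x i ^ q i := by
  have hr0 : (0:ℝ) < r := by linarith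
  obtain ⟨t, ht3, hA, hB⟩ : ∃ t:ℝ, 3 < t ∧ (3:ℝ)^r*t^(2-r) < 2/r ∧ (3:ℝ)^r*t^(1-r) < Real.log 2 := by
    have h1 : Tendsto (fun t : ℝ => (3:ℝ)^r * t^(2-r)) atTop (nhds 0) := by
      have h := (tendsto_rpow_neg_atTop (y := r - 2) (by linarith)).const_mul ((3:ℝ)^r)
      simpa [neg_sub, mul_zero] using h
    have h2 : Tendsto (fun t : ℝ => (3:ℝ)^r * t^(1-r)) atTop (nhds 0) := by
      have h := (tendsto_rpow_neg_atTop (y := r - 1) (by linarith)).const_mul ((3:ℝ)^r)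
      simpa [neg_sub, mul_zero] using h
    have e1 := h1.eventually_lt_const (show (0:ℝ) < 2/r by positivity)
    have e2 := h2.eventually_lt_const (show (0:ℝ) < Real.log 2 from Real.log_pos (by norm_num))
    have e3 := eventually_gt_atTop (3:ℝ)
    exact ((e3.and (e1.and e2)).exists).imp (fun t h => ⟨h.1, h.2.1, h.2.2⟩)
  have ht0 : (0:ℝ) < t := by linarith
  set ε : ℝ := (3/t)^r with hεdef
  have hε0 : 0 < ε := rpow_pos_of_pos (by positivity) r
  have hε1 : ε < 1 := by
    apply rpow_lt_one (by positivity) _ hr0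
    rw [div_lt_one ht0]; linarith
  have htr0 : (0:ℝ) < t^r := rpow_pos_of_pos ht0 r
  have hεeq : ε = 3^r / t^r := div_rpow (by norm_num) ht0.le r
  have key1 : ε * t^r = 3^r := by rw [hεeq]; field_simp
  have key2 : ε * t^(2:ℕ) = 3^r * t^(2-r) := by
    have h2 : (t:ℝ)^(2:ℕ) = t^((2:ℝ)) := by
      rw [← rpow_natCast t 2]; norm_num
    rw [hεeq, h2, rpow_sub ht0]; field_simp
  have key3 : ε * Real.log t ≤ 3^r * t^(1-r) := by
    have hlog : Real.log t ≤ t := by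
      have := Real.log_le_sub_one_of_pos ht0; linarith
    have h1 : (t:ℝ)^(1-r) = t / t^r := by rw [rpow_sub ht0, rpow_one]
    rw [hεeq, h1, div_mul_eq_mul_div, mul_div_assoc]
    gcongr
  -- bounds
  have hG : t ^ ε ≤ 2 := by
    rw [rpow_def_of_pos ht0]
    calc Real.exp (Real.log t * ε) ≤ Real.exp (Real.log 2) := by
          apply Real.exp_le_exp.mpr
          rw [mul_comm]; linarith
      _ = 2 := Real.exp_log (by norm_num)
  have hM : (3:ℝ) ≤ ((1-ε) * 1^r + ε * t^r) ^ (1/r) := by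
    have h1 : (1:ℝ)^r = 1 := one_rpow r
    have hS : (3:ℝ)^r ≤ (1-ε) * 1^r + ε * t^r := by
      rw [h1, key1]; nlinarith
    calc (3:ℝ) = ((3:ℝ)^r)^(1/r) := by
          rw [← Real.rpow_mul (by norm_num : (0:ℝ) ≤ 3), mul_one_div_cancel hr0.ne', rpow_one]
      _ ≤ _ := Real.rpow_le_rpow (by positivity) hS (by positivity)
  refine ⟨1, ![1, t], ![1 - ε, ε], ?_, ?_, ?_, ?_⟩
  · intro i; fin_cases i <;> simp <;> linarith
  · intro i; fin_cases i <;> simp <;> linarith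
  · rw [Fin.sum_univ_two]; simp
  · have hinf : (Finset.univ.inf' Finset.univ_nonempty ![(1:ℝ), t]) = 1 := by
      apply le_antisymm
      · simpa using Finset.inf'_le ![(1:ℝ), t] (Finset.mem_univ (0 : Fin 2))
      · apply Finset.le_inf'
        intro i _; fin_cases i <;> simp <;> linarith
    rw [hinf]
    rw [Fin.sum_univ_two, Fin.sum_univ_two, Fin.sum_univ_two, Fin.prod_univ_two]
    simp only [Matrix.cons_val_zero, Matrix.cons_val_one, Matrix.head_cons]
    have hσ : (1-ε) * ((1:ℝ) - ((1-ε)*1 + ε*t))^2 + ε * (t - ((1-ε)*1 + ε*t))^2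
        = ε*(1-ε)*(t-1)^2 := by ring
    have hL : r / (2*1) * ((1-ε) * ((1:ℝ) - ((1-ε)*1 + ε*t))^2 + ε * (t - ((1-ε)*1 + ε*t))^2) < 1 := by
      rw [hσ]
      have h1 : ε*(1-ε)*(t-1)^2 ≤ ε * t^(2:ℕ) := by nlinarith
      have h2 : r / (2*1) * (ε * t^(2:ℕ)) < 1 := by
        have h3 : r * (3^r * t^(2-r)) < 2 := by
          calc r * (3^r * t^(2-r)) < r * (2/r) := mul_lt_mul_of_pos_left hA hr0
            _ = 2 := by field_simp
        rw [key2, div_mul_eq_mul_div]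
        linarith
      have hrpos : 0 < r / (2*1) := by positivity
      nlinarith
    have hone : (1:ℝ) ^ (1-ε) = 1 := one_rpow _
    rw [hone, one_mul]
    linarith
end

section
/- For $1 < r \le 2$ and $1/2 \le x \le 1$, the function $m(x) = x^r + x^{r-1} - (\frac{3}{r} - \frac{2}{r^2}) x - \frac{1}{r^2}$ is nonnegative. -/
/-- For `1 < r ≤ 2` and `1/2 ≤ x ≤ 1`, `m(x) = x^r + x^{r-1} - (3/r - 2/r²)x - 1/r² ≥ 0`. -/
theorem stmt8 (r x : ℝ) (hr1 : 1 < r) (hr2 : r ≤ 2)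
    (hx1 : 1 / 2 ≤ x) (hx2 : x ≤ 1) :
    0 ≤ x ^ r + x ^ (r - 1) - (3 / r - 2 / r ^ 2) * x - 1 / r ^ 2 := by
  have hx0 : (0:ℝ) < x := by linarith
  have hr0 : (0:ℝ) < r := by linarith
  have hrne : r ≠ 0 := ne_of_gt hr0
  have hD : 0 < x + (r - 1) * (1 - x) := by nlinarith
  -- Bernoulli: x^(2-r) ≤ 1 + (2-r)*(x-1)
  have hbern : x ^ (2 - r) ≤ x + (r - 1) * (1 - x) := by
    have h := rpow_one_add_le_one_add_mul_self (s := x - 1) (by linarith)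
      (p := 2 - r) (by linarith) (by linarith)
    have h1 : (1 + (x - 1)) = x := by ring
    rw [h1] at h
    linarith
  -- hence x^(r-1) ≥ x / (x + (r-1)(1-x))
  have hxr1pos : (0:ℝ) < x ^ (r - 1) := Real.rpow_pos_of_pos hx0 _
  have hmul : x ^ (r - 1) * x ^ (2 - r) = x := by
    rw [← Real.rpow_add hx0]
    norm_num
  have hlow : x / (x + (r - 1) * (1 - x)) ≤ x ^ (r - 1) := by
    rw [div_le_iff₀ hD]
    calc x = x ^ (r - 1) * x ^ (2 - r) := hmul.symm
      _ ≤ x ^ (r - 1) * (x + (r - 1) * (1 - x)) :=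
        mul_le_mul_of_nonneg_left hbern (le_of_lt hxr1pos)
  -- x^r = x^(r-1) * x
  have hxr : x ^ r = x ^ (r - 1) * x := by
    rw [show r = (r - 1) + 1 by ring, Real.rpow_add hx0, Real.rpow_one]
    ring_nf
  -- polynomial key inequality
  have key : ((3 * r - 2) * x + 1) / r ^ 2 ≤ x * (x + 1) / (x + (r - 1) * (1 - x)) := by
    rw [div_le_div_iff₀ (by positivity) hD]
    nlinarith [mul_nonneg (mul_nonneg (by linarith : (0:ℝ) ≤ r - 1) (by linarith : (0:ℝ) ≤ r - 1))
        (mul_nonneg (by linarith : (0:ℝ) ≤ 2 * x - 1) (by linarith : (0:ℝ) ≤ 2 * x + 1)),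
      mul_nonneg (mul_nonneg (by linarith : (0:ℝ) ≤ r - 1) (by linarith : (0:ℝ) ≤ 2 - r))
        (by linarith : (0:ℝ) ≤ 2 * x - 1)]
  have hrw : (3 / r - 2 / r ^ 2) * x + 1 / r ^ 2 = ((3 * r - 2) * x + 1) / r ^ 2 := by
    field_simp
  have hchain : (3 / r - 2 / r ^ 2) * x + 1 / r ^ 2 ≤ x ^ (r - 1) * (x + 1) := by
    rw [hrw]
    calc ((3 * r - 2) * x + 1) / r ^ 2 ≤ x * (x + 1) / (x + (r - 1) * (1 - x)) := key
      _ = x / (x + (r - 1) * (1 - x)) * (x + 1) := by ring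
      _ ≤ x ^ (r - 1) * (x + 1) := mul_le_mul_of_nonneg_right hlow (by linarith)
  rw [hxr]
  nlinarith [hchain]
end

section
/- For $1/2 \le r < 1$ and $1/2 \le x \le 1$, the function $m(x) = x^r + x^{r-1} - (\frac{3}{r} - \frac{2}{r^2}) x - \frac{1}{r^2}$ is nonpositive. -/
/-- For `1/2 ≤ r < 1` and `1/2 ≤ x ≤ 1`, `m(x) = x^r + x^{r-1} - (3/r - 2/r²)x - 1/r² ≤ 0`. -/
theorem stmt9 (r x : ℝ) (hr1 : 1 / 2 ≤ r) (hr2 : r < 1)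
    (hx1 : 1 / 2 ≤ x) (hx2 : x ≤ 1) :
    x ^ r + x ^ (r - 1) - (3 / r - 2 / r ^ 2) * x - 1 / r ^ 2 ≤ 0 := by
  have hr0 : (0:ℝ) < r := by linarith
  have hx0 : (0:ℝ) < x := by linarith
  have hp0 : (0:ℝ) < 1 - r := by linarith
  -- Bernoulli: x ^ r ≤ 1 + r * (x - 1)
  have hA : x ^ r ≤ 1 + r * (x - 1) := by
    have := rpow_one_add_le_one_add_mul_self (s := x - 1) (p := r)
      (by linarith) (by linarith) (by linarith)
    simpa using this
  -- Bernoulli: 2 ^ (1-r) ≤ 2 - r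
  have hBern2 : (2:ℝ) ^ (1 - r) ≤ 2 - r := by
    have := rpow_one_add_le_one_add_mul_self (s := (1:ℝ)) (p := 1 - r)
      (by norm_num) hp0.le (by linarith)
    norm_num at this
    linarith
  have hc0 : (0:ℝ) < ((1:ℝ)/2) ^ (1 - r) := Real.rpow_pos_of_pos (by norm_num) _
  have hc1 : ((1:ℝ)/2) ^ (1 - r) ≤ 1 :=
    Real.rpow_le_one (by norm_num) (by norm_num) hp0.le
  set c : ℝ := ((1:ℝ)/2) ^ (1 - r) with hc_def
  -- concavity chord: (2-2x) * c + (2x-1) ≤ x ^ (1-r)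
  have hconc : (2 - 2*x) * c + (2*x - 1) ≤ x ^ (1 - r) := by
    have h := (Real.concaveOn_rpow hp0.le (by linarith)).2
      (by norm_num : ((1:ℝ)/2) ∈ Set.Ici (0:ℝ))
      (by norm_num : (1:ℝ) ∈ Set.Ici (0:ℝ))
      (by linarith : (0:ℝ) ≤ 2 - 2*x) (by linarith : (0:ℝ) ≤ 2*x - 1)
      (by ring : (2 - 2*x) + (2*x - 1) = 1)
    have hx_eq : (2 - 2*x) • ((1:ℝ)/2) + (2*x - 1) • (1:ℝ) = x := by
      simp; ring
    rw [hx_eq] at h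
    simpa [hc_def, smul_eq_mul, Real.one_rpow] using h
  have hLpos : 0 < (2 - 2*x) * c + (2*x - 1) := by
    nlinarith [mul_nonneg (by linarith : (0:ℝ) ≤ 2*x - 1) (by linarith : (0:ℝ) ≤ 1 - c)]
  -- x ^ (r-1) = (x ^ (1-r))⁻¹
  have hxr1 : x ^ (r - 1) = (x ^ (1 - r))⁻¹ := by
    rw [← Real.rpow_neg hx0.le]
    congr 1
    ring
  have hxp_pos : 0 < x ^ (1 - r) := Real.rpow_pos_of_pos hx0 _
  have hinv1 : (x ^ (1 - r))⁻¹ ≤ ((2 - 2*x) * c + (2*x - 1))⁻¹ :=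
    inv_anti₀ hLpos hconc
  -- AM-HM: ((2-2x)*c + (2x-1))⁻¹ ≤ (2-2x)*c⁻¹ + (2x-1)
  have hAMHM : ((2 - 2*x) * c + (2*x - 1))⁻¹ ≤ (2 - 2*x) * c⁻¹ + (2*x - 1) := by
    rw [← one_div, div_le_iff₀ hLpos]
    have hcc : c⁻¹ * c = 1 := inv_mul_cancel₀ hc0.ne'
    have hch : 2 ≤ c + c⁻¹ := by nlinarith [sq_nonneg (c - 1), hcc, hc0]
    have hexp : ((2 - 2*x) * c⁻¹ + (2*x - 1)) * ((2 - 2*x) * c + (2*x - 1))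
        = (2 - 2*x) ^ 2 * (c⁻¹ * c) + (2*x - 1) * (2 - 2*x) * (c + c⁻¹)
          + (2*x - 1) ^ 2 := by ring
    rw [hexp, hcc]
    nlinarith [mul_le_mul_of_nonneg_left hch
      (mul_nonneg (by linarith : (0:ℝ) ≤ 2*x - 1) (by linarith : (0:ℝ) ≤ 2 - 2*x)),
      sq_nonneg (2 - 2*x)]
  -- c⁻¹ = 2 ^ (1-r) ≤ 2 - r
  have hcinv : c⁻¹ = (2:ℝ) ^ (1 - r) := by
    rw [hc_def, one_div, Real.inv_rpow (by norm_num : (0:ℝ) ≤ 2), inv_inv]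
  have hB : x ^ (r - 1) ≤ (2 - 2*x) * (2 - r) + (2*x - 1) := by
    rw [hxr1]
    refine le_trans (le_trans hinv1 hAMHM) ?_
    have hle : c⁻¹ ≤ 2 - r := by rw [hcinv]; exact hBern2
    nlinarith [hle]
  -- final polynomial inequality
  have hr2' : (0:ℝ) < r ^ 2 := by positivity
  have hpoly : (1 + r * (x - 1)) + ((2 - 2*x) * (2 - r) + (2*x - 1))
      ≤ (3 / r - 2 / r ^ 2) * x + 1 / r ^ 2 := by
    rw [show (3 / r - 2 / r ^ 2) * x + 1 / r ^ 2 = ((3*r - 2) * x + 1) / r ^ 2 from by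
      field_simp, le_div_iff₀ hr2']
    nlinarith [mul_nonneg (by linarith : (0:ℝ) ≤ 2*x - 1)
        (mul_nonneg (by linarith : (0:ℝ) ≤ 2*r - 1) (by linarith : (0:ℝ) ≤ 1 - r)),
      mul_nonneg (by linarith : (0:ℝ) ≤ 2 - 2*x)
        (mul_nonneg hr0.le (sq_nonneg (r - 1)))]
  linarith [hA, hB, hpoly]
end

section
/- For $1/2 < r < 1$, $0 < q < 1$, and $x \ge 1$, the inequality $\frac{r-1}{r}(q + (1-q)x^{-r})^{(1-2r)/r} x^{-r-1} + \frac{1}{r} x^{q-2} \le 1$ holds. -/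
/-- For `1/2 < r < 1`, `0 < q < 1`, `x ≥ 1`:
`((r-1)/r)(q + (1-q)x^{-r})^{(1-2r)/r} x^{-r-1} + (1/r) x^{q-2} ≤ 1`. -/
theorem stmt11 (r q x : ℝ) (hr1 : 1 / 2 < r) (hr2 : r < 1)
    (hq1 : 0 < q) (hq2 : q < 1) (hx : 1 ≤ x) :
    (r - 1) / r * (q + (1 - q) * x ^ (-r)) ^ ((1 - 2 * r) / r) * x ^ (-r - 1)
        + 1 / r * x ^ (q - 2) ≤ 1 := by
  have hx0 : (0:ℝ) < x := lt_of_lt_of_le one_pos hx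
  have hr0 : (0:ℝ) < r := by linarith
  have hxrn : 0 ≤ x ^ (-r) := Real.rpow_nonneg hx0.le _
  have hA0 : 0 < q + (1 - q) * x ^ (-r) := by
    have : 0 ≤ (1 - q) * x ^ (-r) := mul_nonneg (by linarith) hxrn
    linarith
  have hxr : x ^ (-r) ≤ 1 := Real.rpow_le_one_of_one_le_of_nonpos hx (by linarith)
  have hA1 : q + (1 - q) * x ^ (-r) ≤ 1 := by nlinarith
  have h1 : 1 ≤ (q + (1 - q) * x ^ (-r)) ^ ((1 - 2 * r) / r) :=
    Real.one_le_rpow_of_pos_of_le_one_of_nonpos hA0 hA1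
      (div_nonpos_of_nonpos_of_nonneg (by linarith) hr0.le)
  have hxp : 0 < x ^ (-r - 1) := Real.rpow_pos_of_pos hx0 _
  have hcoef : (r - 1) / r < 0 := div_neg_of_neg_of_pos (by linarith) hr0
  have hterm1 : (r - 1) / r * (q + (1 - q) * x ^ (-r)) ^ ((1 - 2 * r) / r) * x ^ (-r - 1)
      ≤ (r - 1) / r * x ^ (-r - 1) := by
    have h := mul_le_mul_of_nonpos_left h1 hcoef.le
    calc (r - 1) / r * (q + (1 - q) * x ^ (-r)) ^ ((1 - 2 * r) / r) * x ^ (-r - 1)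
        ≤ (r - 1) / r * 1 * x ^ (-r - 1) := by
          apply mul_le_mul_of_nonneg_right _ hxp.le
          simpa using h
      _ = (r - 1) / r * x ^ (-r - 1) := by ring
  -- weighted AM-GM : x^{(-r-1)(1-r)} = 1^r * (x^{-r-1})^{1-r} ≤ r*1 + (1-r)*x^{-r-1}
  have hgm : x ^ ((-r - 1) * (1 - r)) ≤ r * 1 + (1 - r) * x ^ (-r - 1) := by
    have h := Real.geom_mean_le_arith_mean2_weighted (by linarith : (0:ℝ) ≤ r)
      (by linarith : (0:ℝ) ≤ 1 - r) zero_le_one hxp.le (by ring)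
    have hrw : x ^ ((-r - 1) * (1 - r)) = (1:ℝ) ^ r * (x ^ (-r - 1)) ^ (1 - r) := by
      rw [Real.rpow_mul hx0.le, Real.one_rpow, one_mul]
    rw [hrw]; exact h
  have hexp : x ^ (q - 2) ≤ x ^ ((-r - 1) * (1 - r)) :=
    Real.rpow_le_rpow_of_exponent_le hx (by nlinarith)
  have hterm2 : 1 / r * x ^ (q - 2) ≤ 1 + (1 - r) / r * x ^ (-r - 1) := by
    have h2 : x ^ (q - 2) ≤ r + (1 - r) * x ^ (-r - 1) := by
      calc x ^ (q - 2) ≤ x ^ ((-r - 1) * (1 - r)) := hexp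
        _ ≤ r * 1 + (1 - r) * x ^ (-r - 1) := hgm
        _ = r + (1 - r) * x ^ (-r - 1) := by ring
    calc 1 / r * x ^ (q - 2) = x ^ (q - 2) / r := by ring
      _ ≤ (r + (1 - r) * x ^ (-r - 1)) / r := by
          gcongr
      _ = 1 + (1 - r) / r * x ^ (-r - 1) := by field_simp
  have : (r - 1) / r * x ^ (-r - 1) + (1 + (1 - r) / r * x ^ (-r - 1)) = 1 := by
    field_simp
    ring
  linarith [hterm1, hterm2]
end

section
/- For $1/2 < r < 1$, $0 < q < 1$, and $x \ge 1$, the function $D_1(x,q) = (q x^r + 1-q)^{(1-r)/r} x^{r-1} - x^{q-1} - r(1-q)(x-1)$ satisfies $D_1(x,q) \le 0$. -/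
/-- Key calculus lemma: `2 log x ≤ x - x⁻¹` for `x ≥ 1`. -/
lemma two_log_le_sub_inv {x : ℝ} (hx : 1 ≤ x) : 2 * Real.log x ≤ x - x⁻¹ := by
  set f : ℝ → ℝ := fun t => t - t⁻¹ - 2 * Real.log t with hf
  have hderiv : ∀ t : ℝ, 1 ≤ t → HasDerivAt f (1 - (-(t ^ 2)⁻¹) - 2 * t⁻¹) t := by
    intro t ht
    have ht0 : t ≠ 0 := by intro h; rw [h] at ht; linarith
    exact ((hasDerivAt_id t).sub (hasDerivAt_inv ht0)).sub
      ((Real.hasDerivAt_log ht0).const_mul 2)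
  have hmono : MonotoneOn f (Set.Ici 1) := by
    apply monotoneOn_of_deriv_nonneg (convex_Ici 1)
    · intro t ht
      exact ((hderiv t ht).continuousAt).continuousWithinAt
    · intro t ht
      rw [interior_Ici] at ht
      exact ((hderiv t (le_of_lt ht)).differentiableAt).differentiableWithinAt
    · intro t ht
      rw [interior_Ici] at ht
      have ht1 : (1 : ℝ) < t := ht
      have ht0 : (0 : ℝ) < t := by linarith
      rw [(hderiv t ht1.le).deriv]
      have h1 : (t ^ 2)⁻¹ = t⁻¹ * t⁻¹ := by rw [sq, mul_inv]
      have h2 : t * t⁻¹ = 1 := mul_inv_cancel₀ (ne_of_gt ht0)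
      have h3 : 0 < t⁻¹ := inv_pos.mpr ht0
      nlinarith [sq_nonneg (1 - t⁻¹)]
  have h1 : f 1 ≤ f x := hmono (by simp) (by simpa using hx) hx
  simp only [hf, inv_one, Real.log_one] at h1
  linarith

set_option maxHeartbeats 2000000 in
/-- For `1/2 < r < 1`, `0 < q < 1`, `x ≥ 1`:
`D₁(x,q) = (q x^r + 1-q)^{(1-r)/r} x^{r-1} - x^{q-1} - r(1-q)(x-1) ≤ 0`. -/
theorem stmt12 (r q x : ℝ) (hr1 : 1 / 2 < r) (hr2 : r < 1)
    (hq1 : 0 < q) (hq2 : q < 1) (hx : 1 ≤ x) :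
    (q * x ^ r + 1 - q) ^ ((1 - r) / r) * x ^ (r - 1) - x ^ (q - 1)
        - r * (1 - q) * (x - 1) ≤ 0 := by
  have hx0 : (0 : ℝ) < x := by linarith
  have hr0 : (0 : ℝ) < r := by linarith
  set p : ℝ := (1 - r) / r with hp
  clear_value p
  have hp0 : 0 < p := by rw [hp]; exact div_pos (by linarith) hr0
  have hp1 : p ≤ 1 := by rw [hp, div_le_one hr0]; linarith
  set B : ℝ := x ^ r with hB
  clear_value B
  have hB1 : (1 : ℝ) ≤ B := by rw [hB]; exact Real.one_le_rpow hx hr0.le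
  have hB0 : (0 : ℝ) < B := by linarith
  have hBinv : 0 < B⁻¹ := inv_pos.mpr hB0
  have hBinv1 : B⁻¹ ≤ 1 := inv_le_one_of_one_le₀ hB1
  have hA0 : (0 : ℝ) ≤ q * B + 1 - q := by nlinarith
  have hrp : r * p = 1 - r := by rw [hp]; field_simp
  -- rewrite the first term as (1 + s)^p with s = (1-q)*(B⁻¹ - 1)
  have hxr1 : x ^ (r - 1) = (B ^ p)⁻¹ := by
    rw [hB, ← Real.rpow_mul hx0.le, hrp, ← Real.rpow_neg hx0.le]
    ring_nf
  have hterm1 : (q * B + 1 - q) ^ p * x ^ (r - 1)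
      = (1 + (1 - q) * (B⁻¹ - 1)) ^ p := by
    rw [hxr1, ← Real.inv_rpow hB0.le, ← Real.mul_rpow hA0 (inv_nonneg.mpr hB0.le)]
    congr 1
    field_simp
    ring
  -- Bernoulli inequality 1
  have hs1 : (-1 : ℝ) ≤ (1 - q) * (B⁻¹ - 1) := by nlinarith
  have hbern1 : (1 + (1 - q) * (B⁻¹ - 1)) ^ p ≤ 1 + p * ((1 - q) * (B⁻¹ - 1)) :=
    rpow_one_add_le_one_add_mul_self hs1 hp0.le hp1
  -- Bernoulli inequality 2 : B⁻¹ - 1 ≤ r * (x⁻¹ - 1)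
  have hu0 : 0 < x⁻¹ := inv_pos.mpr hx0
  have hu1 : x⁻¹ ≤ 1 := inv_le_one_of_one_le₀ hx
  have hBi : B⁻¹ = (1 + (x⁻¹ - 1)) ^ r := by
    rw [hB, ← Real.inv_rpow hx0.le]
    ring_nf
  have hbern2 : B⁻¹ ≤ 1 + r * (x⁻¹ - 1) := by
    rw [hBi]
    exact rpow_one_add_le_one_add_mul_self (by linarith) hr0.le hr2.le
  -- exponential bound for x^(q-1)
  have hlog : 1 + (q - 1) * Real.log x ≤ x ^ (q - 1) := by
    rw [Real.rpow_def_of_pos hx0, mul_comm (Real.log x)]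
    have := Real.add_one_le_exp ((q - 1) * Real.log x)
    linarith
  -- logarithm bound
  have hloglem : 2 * Real.log x ≤ x - x⁻¹ := two_log_le_sub_inv hx
  -- key inequality : log x ≤ (1-r)(1 - x⁻¹) + r(x-1)
  have hxu : x * x⁻¹ = 1 := mul_inv_cancel₀ (ne_of_gt hx0)
  have hx2u : 0 ≤ x + x⁻¹ - 2 := by nlinarith [mul_nonneg (by linarith : (0:ℝ) ≤ x - 1) (by linarith : (0:ℝ) ≤ 1 - x⁻¹)]
  have hkey : Real.log x ≤ (1 - r) * (1 - x⁻¹) + r * (x - 1) := by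
    nlinarith [mul_nonneg (by linarith : (0:ℝ) ≤ 2 * r - 1) hx2u]
  -- combine a bound on the first term
  have hT1 : (q * B + 1 - q) ^ p * x ^ (r - 1) ≤ 1 + (1 - r) * (1 - q) * (x⁻¹ - 1) := by
    rw [hterm1]
    have h2 : p * ((1 - q) * (B⁻¹ - 1)) ≤ p * ((1 - q) * (r * (x⁻¹ - 1))) := by
      apply mul_le_mul_of_nonneg_left _ hp0.le
      apply mul_le_mul_of_nonneg_left _ (by linarith : (0:ℝ) ≤ 1 - q)
      linarith
    have h3 : p * ((1 - q) * (r * (x⁻¹ - 1))) = (1 - r) * (1 - q) * (x⁻¹ - 1) := by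
      have hpr : p * r = 1 - r := by rw [mul_comm]; exact hrp
      linear_combination ((1 - q) * (x⁻¹ - 1)) * hpr
    linarith [hbern1]
  -- finish
  have hfin : 0 ≤ (1 - q) * ((1 - r) * (1 - x⁻¹) + r * (x - 1) - Real.log x) :=
    mul_nonneg (by linarith) (by linarith)
  nlinarith [hT1, hlog, hfin]
end

section
/- For positive reals $x_1, x_2$ with weights $q, 1-q$ ($0 < q < 1$) and $0 < r \le 2$, the two-variable case of the inequality holds: $(q x_1^r + (1-q) x_2^r)^{1/r} - x_1^q x_2^{1-q} \le \frac{r}{2 \min(x_1,x_2)} \left( q(x_1 - A)^2 + (1-q)(x_2 - A)^2 \right)$, where $A = q x_1 + (1-q) x_2$. -/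
open Real Set

lemma mono_aux {f f' : ℝ → ℝ} {b a : ℝ} (hab : b ≤ a)
    (hd : ∀ x ∈ Set.Ici b, HasDerivAt f (f' x) x)
    (h0 : ∀ x ∈ Set.Ioi b, 0 ≤ f' x) : f b ≤ f a := by
  have h := monotoneOn_of_hasDerivWithinAt_nonneg (convex_Ici b)
    (fun x hx => (hd x hx).continuousAt.continuousWithinAt)
    (fun x hx => ((hd x (le_of_lt (by simpa [interior_Ici] using hx))).hasDerivWithinAt))
    (by simpa [interior_Ici] using h0)
  exact h self_mem_Ici hab hab

lemma anti_aux {f f' : ℝ → ℝ} {b a : ℝ} (hab : b ≤ a)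
    (hd : ∀ x ∈ Set.Icc b a, HasDerivAt f (f' x) x)
    (h0 : ∀ x ∈ Set.Ioo b a, f' x ≤ 0) : f a ≤ f b := by
  have h := antitoneOn_of_hasDerivWithinAt_nonpos (convex_Icc b a)
    (fun x hx => (hd x hx).continuousAt.continuousWithinAt)
    (fun x hx => ((hd x (by simpa [interior_Icc] using Set.Ioo_subset_Icc_self (by simpa [interior_Icc] using hx))).hasDerivWithinAt))
    (by simpa [interior_Icc] using h0)
  exact h (left_mem_Icc.2 hab) (right_mem_Icc.2 hab) hab

-- Bernoulli for nonpositive exponent, base t > 0 written as ratio form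
lemma bern_neg {t u : ℝ} (ht : 0 < t) (hu0 : 0 ≤ u) (hu1 : u ≤ 1) :
    1 - u * (t - 1) ≤ t ^ (-u) := by
  have h1 : t ^ u ≤ 1 + u * (t - 1) := by
    have := rpow_one_add_le_one_add_mul_self (s := t - 1) (by linarith) hu0 hu1
    simpa using this
  have h2 : (0:ℝ) < t ^ u := rpow_pos_of_pos ht u
  have h3 : t ^ (-u) = (t ^ u)⁻¹ := by rw [rpow_neg ht.le]
  rw [h3]
  rcases le_or_gt (1 - u * (t - 1)) 0 with h|h
  · exact h.trans (inv_nonneg.2 h2.le)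
  · have h4 : (1 - u * (t - 1)) * t ^ u ≤ 1 := by nlinarith [sq_nonneg (u * (t - 1))]
    have h5 : (0:ℝ) < (t ^ u)⁻¹ := inv_pos.2 h2
    have h6 := mul_inv_cancel₀ h2.ne'
    nlinarith [mul_le_mul_of_nonneg_right h4 h5.le]

lemma sinh_aux {r c : ℝ} (hr1 : 0 < r) (hr2 : r ≤ 1) (hc : 1 ≤ c) :
    c ^ r - c ^ (-r) ≤ r * (c - c⁻¹) := by
  have key : ∀ x ∈ Set.Ici (1:ℝ),
      HasDerivAt (fun x : ℝ => r * (x - x⁻¹) - x ^ r + x ^ (-r))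
        (r * (1 + (x^2)⁻¹) - r * x ^ (r-1) + (-r) * x ^ (-r-1)) x := by
    intro x hx
    have hx0 : (0:ℝ) < x := lt_of_lt_of_le one_pos hx
    have h1 : HasDerivAt (fun x : ℝ => r * (x - x⁻¹)) (r * (1 - -(x^2)⁻¹)) x :=
      ((hasDerivAt_id x).sub (hasDerivAt_inv hx0.ne')).const_mul r
    have h2 : HasDerivAt (fun x : ℝ => x ^ r) (r * x ^ (r-1)) x :=
      Real.hasDerivAt_rpow_const (Or.inl hx0.ne')
    have h3 : HasDerivAt (fun x : ℝ => x ^ (-r)) ((-r) * x ^ (-r-1)) x :=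
      Real.hasDerivAt_rpow_const (Or.inl hx0.ne')
    have := (h1.sub h2).add h3
    exact this.congr_deriv (by ring)
  have hnn : ∀ x ∈ Set.Ioi (1:ℝ),
      0 ≤ r * (1 + (x^2)⁻¹) - r * x ^ (r-1) + (-r) * x ^ (-r-1) := by
    intro x hx
    have hx1 : (1:ℝ) < x := hx
    have hx0 : (0:ℝ) < x := one_pos.trans hx1
    have hx2pos : (0:ℝ) < x ^ 2 := by positivity
    have ha : (1:ℝ) ≤ x ^ (1+r) := Real.one_le_rpow hx1.le (by linarith)
    have hb : (1:ℝ) ≤ x ^ (1-r) := Real.one_le_rpow hx1.le (by linarith)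
    have hab : x ^ (1+r) * x ^ (1-r) = x ^ 2 := by
      rw [← Real.rpow_add hx0, ← Real.rpow_natCast x 2]
      norm_num
    have e1 : x ^ (r-1) = x ^ (1+r) / x ^ 2 := by
      rw [← Real.rpow_natCast x 2, ← Real.rpow_sub hx0]
      congr 1; push_cast; ring
    have e2 : x ^ (-r-1) = x ^ (1-r) / x ^ 2 := by
      rw [← Real.rpow_natCast x 2, ← Real.rpow_sub hx0]
      congr 1; push_cast; ring
    have key2 : x ^ (1+r) + x ^ (1-r) ≤ x ^ 2 + 1 := by
      nlinarith [mul_nonneg (sub_nonneg.2 ha) (sub_nonneg.2 hb)]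
    have eq3 : r * (1 + (x^2)⁻¹) - r * (x ^ (1+r) / x ^ 2) + (-r) * (x ^ (1-r) / x ^ 2)
        = r * ((x ^ 2 + 1 - x ^ (1+r) - x ^ (1-r)) / x ^ 2) := by
      field_simp
      ring
    rw [e1, e2, eq3]
    have := mul_nonneg hr1.le (div_nonneg (by linarith : (0:ℝ) ≤ x ^ 2 + 1 - x ^ (1+r) - x ^ (1-r)) hx2pos.le)
    linarith
  have h := mono_aux hc key hnn
  simp only [Real.one_rpow, inv_one] at h
  linarith

set_option maxHeartbeats 1000000 in
lemma p1sq {a b r : ℝ} (hb : 0 < b) (hab : b ≤ a) (hr1 : 0 < r) (hr2 : r ≤ 1) :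
    a ^ (1-r) * b ^ (1-r) * (a ^ r - b ^ r) ^ 2 ≤ r ^ 2 * (a - b) ^ 2 := by
  have ha : 0 < a := hb.trans_le hab
  have htpos : 0 < a / b := div_pos ha hb
  have ht : 1 ≤ a / b := (one_le_div hb).2 hab
  have hc : 1 ≤ (a/b) ^ (2⁻¹:ℝ) := Real.one_le_rpow ht (by norm_num)
  have S := sinh_aux hr1 hr2 hc
  set A1 := a ^ (2⁻¹ * r) with hA1def
  set B1 := b ^ (2⁻¹ * r) with hB1def
  set A2 := a ^ (2⁻¹:ℝ) with hA2def
  set B2 := b ^ (2⁻¹:ℝ) with hB2def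
  have hA1 : 0 < A1 := Real.rpow_pos_of_pos ha _
  have hB1 : 0 < B1 := Real.rpow_pos_of_pos hb _
  have hA2 : 0 < A2 := Real.rpow_pos_of_pos ha _
  have hB2 : 0 < B2 := Real.rpow_pos_of_pos hb _
  -- rewrite S in terms of A1 B1 A2 B2
  have e1 : ((a/b) ^ (2⁻¹:ℝ)) ^ r = A1 / B1 := by
    rw [← Real.rpow_mul htpos.le, Real.div_rpow ha.le hb.le]
  have e2 : ((a/b) ^ (2⁻¹:ℝ)) ^ (-r) = B1 / A1 := by
    rw [← Real.rpow_mul htpos.le, show 2⁻¹ * (-r) = -(2⁻¹ * r) by ring,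
      Real.rpow_neg htpos.le, Real.div_rpow ha.le hb.le, inv_div]
  have e3 : ((a/b) ^ (2⁻¹:ℝ))⁻¹ = B2 / A2 := by
    rw [Real.div_rpow ha.le hb.le, inv_div]
  have e4 : (a/b) ^ (2⁻¹:ℝ) = A2 / B2 := Real.div_rpow ha.le hb.le _
  rw [e1, e2, e3, e4] at S
  have S' : (A1*A1 - B1*B1)*(B2*A2) ≤ r*(A2*A2 - B2*B2)*(B1*A1) := by
    have hS := mul_le_mul_of_nonneg_right S
      (le_of_lt (mul_pos (mul_pos (mul_pos hA1 hB1) hA2) hB2))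
    have l : (A1/B1 - B1/A1) * (A1*B1*A2*B2) = (A1*A1 - B1*B1)*(B2*A2) := by
      field_simp
    have rr : r * (A2/B2 - B2/A2) * (A1*B1*A2*B2) = r*(A2*A2 - B2*B2)*(B1*A1) := by
      field_simp
    rw [l, rr] at hS; exact hS
  have hA1B1 : B1 ≤ A1 := Real.rpow_le_rpow hb.le hab (by positivity)
  have hA2B2 : B2 ≤ A2 := Real.rpow_le_rpow hb.le hab (by norm_num)
  have hnn : 0 ≤ (A1*A1 - B1*B1)*(B2*A2) :=
    mul_nonneg (by nlinarith) (mul_pos hB2 hA2).le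
  have sq := mul_self_le_mul_self hnn S'
  have e_a : a ^ (1-r) * (A1*A1) = A2*A2 := by
    rw [hA1def, hA2def, ← Real.rpow_add ha, ← Real.rpow_add ha, ← Real.rpow_add ha]
    congr 1; ring
  have e_b : b ^ (1-r) * (B1*B1) = B2*B2 := by
    rw [hB1def, hB2def, ← Real.rpow_add hb, ← Real.rpow_add hb, ← Real.rpow_add hb]
    congr 1; ring
  have e_ar : a ^ r = A1*A1 := by
    rw [hA1def, ← Real.rpow_add ha]; congr 1; ring
  have e_br : b ^ r = B1*B1 := by
    rw [hB1def, ← Real.rpow_add hb]; congr 1; ring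
  have e_a2 : a = A2*A2 := by
    rw [hA2def, ← Real.rpow_add ha]; norm_num
  have e_b2 : b = B2*B2 := by
    rw [hB2def, ← Real.rpow_add hb]; norm_num
  rw [e_ar, e_br]
  rw [show a - b = A2*A2 - B2*B2 by rw [← e_a2, ← e_b2]]
  have hD : (0:ℝ) < (A1*A1)*(B1*B1) := mul_pos (mul_pos hA1 hA1) (mul_pos hB1 hB1)
  rw [← mul_le_mul_iff_of_pos_right hD]
  have key : (a^(1-r) * b^(1-r) * (A1*A1 - B1*B1)^2) * ((A1*A1)*(B1*B1))
      = (A2*A2)*(B2*B2)*(A1*A1-B1*B1)^2 := by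
    rw [← e_a, ← e_b]; ring
  rw [key]
  nlinarith [sq]

lemma cf_two {a b q : ℝ} (hb : 0 < b) (hab : b ≤ a) (hq1 : 0 < q) (hq2 : q < 1) :
    q*a + (1-q)*b ≤ a^q * b^(1-q) + q*(1-q)*(a-b)^2/(2*b) := by
  have key : ∀ x ∈ Set.Ici b,
      HasDerivAt (fun x : ℝ => x^q * b^(1-q) + q*(1-q)*(x-b)^2/(2*b) - (q*x + (1-q)*b))
        ((q * x^(q-1)) * b^(1-q) + q*(1-q)*(2*(x-b)^1*1)/(2*b) - q*1) x := by
    intro x hx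
    have hx0 : (0:ℝ) < x := lt_of_lt_of_le hb hx
    have h1 : HasDerivAt (fun x : ℝ => x^q * b^(1-q)) ((q * x^(q-1)) * b^(1-q)) x :=
      (Real.hasDerivAt_rpow_const (Or.inl hx0.ne')).mul_const _
    have h2 : HasDerivAt (fun x : ℝ => q*(1-q)*(x-b)^2/(2*b))
        (q*(1-q)*(2*(x-b)^1*1)/(2*b)) x :=
      ((((hasDerivAt_id x).sub_const b).pow 2).const_mul (q*(1-q))).div_const (2*b)
    have h3 : HasDerivAt (fun x : ℝ => q*x + (1-q)*b) (q*1) x :=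
      ((hasDerivAt_id' x).const_mul q).add_const _
    exact (h1.add h2).sub h3
  have hnn : ∀ x ∈ Set.Ioi b,
      0 ≤ (q * x^(q-1)) * b^(1-q) + q*(1-q)*(2*(x-b)^1*1)/(2*b) - q*1 := by
    intro x hx
    have hx1 : b < x := hx
    have hx0 : (0:ℝ) < x := hb.trans hx1
    have htpos : (0:ℝ) < x/b := div_pos hx0 hb
    have B' := bern_neg htpos (by linarith : (0:ℝ) ≤ 1-q) (by linarith)
    have E : (x/b) ^ (-(1-q)) = x^(q-1) * b^(1-q) := by
      rw [show -(1-q) = q-1 by ring, Real.div_rpow hx0.le hb.le, div_eq_mul_inv,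
        ← Real.rpow_neg hb.le]
      congr 2; ring
    rw [E] at B'
    have hfrac : (x/b - 1) = (x-b)/b := by field_simp
    rw [hfrac] at B'
    have h2 := mul_le_mul_of_nonneg_left B' hq1.le
    have hbne : b ≠ 0 := hb.ne'
    have e2 : q*(1-q)*(2*(x-b)^1*1)/(2*b) = q*((1-q)*((x-b)/b)) := by
      field_simp
    rw [e2]
    nlinarith [h2]
  have h := mono_aux hab key hnn
  have hfb : b^q * b^(1-q) = b := by
    rw [← Real.rpow_add hb]; norm_num
  simp only [sub_self] at h
  rw [hfb] at h
  ring_nf at h ⊢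
  linarith [h]

lemma lip_aux {m v w r : ℝ} (hm : 0 < m) (hmv : m ≤ v) (hvw : v ≤ w)
    (hr1 : 1 ≤ r) (hr2 : r ≤ 2) :
    w^(r-1) ≤ v^(r-1) + (r-1)*m^(r-2)*(w-v) := by
  have hv0 : 0 < v := hm.trans_le hmv
  have hw0 : 0 < w := hv0.trans_le hvw
  have hB := rpow_one_add_le_one_add_mul_self (s := w/v - 1) (p := r-1)
    (by have : 0 < w/v := div_pos hw0 hv0; linarith) (by linarith) (by linarith)
  rw [show (1:ℝ) + (w/v - 1) = w/v by ring] at hB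
  have hdiv : (w/v)^(r-1) = w^(r-1)/v^(r-1) := Real.div_rpow hw0.le hv0.le _
  rw [hdiv] at hB
  have hv1 : 0 < v^(r-1) := Real.rpow_pos_of_pos hv0 _
  have h2 := mul_le_mul_of_nonneg_right hB hv1.le
  rw [div_mul_cancel₀ _ hv1.ne'] at h2
  -- h2 : w^(r-1) ≤ (1 + (r-1)*(w/v-1)) * v^(r-1)
  have e1 : (1 + (r-1)*(w/v - 1)) * v^(r-1) = v^(r-1) + (r-1)*(v^(r-1)/v)*(w-v) := by
    field_simp
  rw [e1] at h2
  have e2 : v^(r-1)/v = v^(r-2) := by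
    have : v^(r-1) = v^(r-2)*v := by
      rw [show r-1 = (r-2)+1 by ring, Real.rpow_add hv0, Real.rpow_one]
    rw [this, mul_div_assoc, div_self hv0.ne', mul_one]
  rw [e2] at h2
  have e3 : v^(r-2) ≤ m^(r-2) := Real.rpow_le_rpow_of_nonpos hm hmv (by linarith)
  nlinarith [mul_le_mul_of_nonneg_right e3 (by linarith : (0:ℝ) ≤ w - v), hr1]

lemma p2 {m A x r : ℝ} (hm : 0 < m) (hmx : m ≤ x) (hmA : m ≤ A)
    (hr1 : 1 ≤ r) (hr2 : r ≤ 2) :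
    x^r ≤ A^r + r*A^(r-1)*(x-A) + r*(r-1)/2*m^(r-2)*(x-A)^2 := by
  have hA0 : 0 < A := hm.trans_le hmA
  have hx0 : 0 < x := hm.trans_le hmx
  have hd : ∀ y : ℝ, 0 < y →
      HasDerivAt (fun y : ℝ => A^r + r*A^(r-1)*(y-A) + r*(r-1)/2*m^(r-2)*(y-A)^2 - y^r)
        (r*A^(r-1)*1 + r*(r-1)/2*m^(r-2)*(2*(y-A)^1*1) - r*y^(r-1)) y := by
    intro y hy0
    have h1 : HasDerivAt (fun y : ℝ => A^r + r*A^(r-1)*(y-A)) (r*A^(r-1)*1) y :=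
      (((hasDerivAt_id y).sub_const A).const_mul (r*A^(r-1))).const_add _
    have h2 : HasDerivAt (fun y : ℝ => r*(r-1)/2*m^(r-2)*(y-A)^2)
        (r*(r-1)/2*m^(r-2)*(2*(y-A)^1*1)) y :=
      (((hasDerivAt_id y).sub_const A).pow 2).const_mul _
    have h3 : HasDerivAt (fun y : ℝ => y^r) (r*y^(r-1)) y :=
      Real.hasDerivAt_rpow_const (Or.inl hy0.ne')
    exact (h1.add h2).sub h3
  rcases le_total x A with hxA | hAx
  · -- x ≤ A : antitone on [x, A]
    have h := anti_aux hxA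
      (fun y hy => hd y (lt_of_lt_of_le hx0 hy.1))
      (by
        intro y hy
        have hmy : m ≤ y := hmx.trans hy.1.le
        have hyA : y ≤ A := hy.2.le
        have hy0 : 0 < y := hm.trans_le hmy
        have key := lip_aux hm hmy hyA hr1 hr2
        have hmr : 0 ≤ (r-1)*m^(r-2) := by
          have : (0:ℝ) < m^(r-2) := Real.rpow_pos_of_pos hm _
          nlinarith
        nlinarith [key, hr1])
    simp only [sub_self] at h
    nlinarith [h]
  · -- A ≤ x : monotone on [A, ∞)
    have h := mono_aux hAx
      (fun y hy => hd y (lt_of_lt_of_le hA0 hy))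
      (by
        intro y hy
        have hAy : A ≤ y := le_of_lt hy
        have key := lip_aux hm hmA hAy hr1 hr2
        nlinarith [key, hr1])
    simp only [sub_self] at h
    nlinarith [h]

set_option maxHeartbeats 1000000 in
theorem aux13 {x₁ x₂ q r : ℝ} (hx₂ : 0 < x₂) (hle : x₂ ≤ x₁) (hq1 : 0 < q) (hq2 : q < 1)
    (hr1 : 0 < r) (hr2 : r ≤ 2) :
    (q * x₁ ^ r + (1 - q) * x₂ ^ r) ^ (1 / r) - x₁ ^ q * x₂ ^ (1 - q)
      ≤ r / (2 * x₂) * (q * (1 - q) * (x₁ - x₂) ^ 2) := by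
  have hx₁ : 0 < x₁ := hx₂.trans_le hle
  have hq2' : (0:ℝ) < 1 - q := by linarith
  have hy1 : 0 < x₁ ^ r := Real.rpow_pos_of_pos hx₁ r
  have hy2 : 0 < x₂ ^ r := Real.rpow_pos_of_pos hx₂ r
  have hEy : 0 < q * x₁ ^ r + (1 - q) * x₂ ^ r := by positivity
  set Ey := q * x₁ ^ r + (1 - q) * x₂ ^ r with hEydef
  set G := x₁ ^ q * x₂ ^ (1 - q) with hGdef
  have hG : 0 < G := mul_pos (Real.rpow_pos_of_pos hx₁ q) (Real.rpow_pos_of_pos hx₂ _)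
  set M := Ey ^ (1/r) with hMdef
  have hM0 : 0 < M := Real.rpow_pos_of_pos hEy _
  have hMr : M ^ r = Ey := by
    rw [hMdef, ← Real.rpow_mul hEy.le, one_div, inv_mul_cancel₀ hr1.ne', Real.rpow_one]
  have hGr : (x₁ ^ r) ^ q * (x₂ ^ r) ^ (1-q) = G ^ r := by
    rw [← Real.rpow_mul hx₁.le, ← Real.rpow_mul hx₂.le, mul_comm r q, mul_comm r (1-q),
      Real.rpow_mul hx₁.le, Real.rpow_mul hx₂.le, ← Real.mul_rpow
      (Real.rpow_pos_of_pos hx₁ q).le (Real.rpow_pos_of_pos hx₂ (1-q)).le]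
  have hy12 : x₂ ^ r ≤ x₁ ^ r := Real.rpow_le_rpow hx₂.le hle hr1.le
  have hGE : G ^ r ≤ Ey := by
    rw [← hGr]
    exact Real.geom_mean_le_arith_mean2_weighted hq1.le hq2'.le hy1.le hy2.le (by ring)
  have hGM : G ≤ M := by
    have h := Real.rpow_le_rpow (Real.rpow_pos_of_pos hG r).le hGE
      (by positivity : (0:ℝ) ≤ 1/r)
    rwa [← Real.rpow_mul hG.le, mul_one_div, div_self hr1.ne', Real.rpow_one] at h
  rcases le_total r 1 with hcase | hcase
  · -- case r ≤ 1
    have CFy := cf_two hy2 hy12 hq1 hq2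
    rw [hGr] at CFy
    have hMx₁ : M ≤ x₁ := by
      have h1 : Ey ≤ x₁ ^ r := by rw [hEydef]; nlinarith
      have h := Real.rpow_le_rpow hEy.le h1 (by positivity : (0:ℝ) ≤ 1/r)
      rwa [← Real.rpow_mul hx₁.le, mul_one_div, div_self hr1.ne', Real.rpow_one] at h
    -- Bernoulli: r * M^(r-1) * (M - G) ≤ M^r - G^r
    have hBern : r * M ^ (r-1) * (M - G) ≤ M ^ r - G ^ r := by
      have hB := rpow_one_add_le_one_add_mul_self (s := G/M - 1) (p := r)
        (by have := div_pos hG hM0; linarith) hr1.le hcase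
      rw [show (1:ℝ) + (G/M - 1) = G/M by ring, Real.div_rpow hG.le hM0.le] at hB
      have hMrpos : 0 < M ^ r := Real.rpow_pos_of_pos hM0 r
      have h2 := mul_le_mul_of_nonneg_right hB hMrpos.le
      rw [div_mul_cancel₀ _ hMrpos.ne'] at h2
      have eM : M ^ r = M ^ (r-1) * M := by
        rw [show r = (r-1)+1 by ring, Real.rpow_add hM0, Real.rpow_one]
        ring_nf
      have hdivM : (1 + r*(G/M - 1)) * M ^ r = M ^ r + r * M ^ (r-1) * (G - M) := by
        rw [eM]; field_simp
      rw [hdivM] at h2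
      linarith
    have hRle : x₁ ^ (r-1) ≤ M ^ (r-1) := Real.rpow_le_rpow_of_nonpos hM0 hMx₁ (by linarith)
    have hchain : r * x₁ ^ (r-1) * (M - G) ≤ q*(1-q)*(x₁ ^ r - x₂ ^ r)^2/(2 * x₂ ^ r) := by
      have h1 : r * x₁ ^ (r-1) * (M - G) ≤ r * M ^ (r-1) * (M - G) := by
        have := mul_le_mul_of_nonneg_right (mul_le_mul_of_nonneg_left hRle hr1.le)
          (by linarith : (0:ℝ) ≤ M - G)
        linarith
      have h2 : M ^ r - G ^ r ≤ q*(1-q)*(x₁ ^ r - x₂ ^ r)^2/(2 * x₂ ^ r) := by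
        rw [hMr]; linarith [CFy]
      linarith
    have hP := p1sq hx₂ hle hr1 hcase
    -- clear denominators and combine
    have hkey1 : r * x₁ ^ (r-1) * (M - G) * (2 * x₂ ^ r) ≤ q*(1-q)*(x₁ ^ r - x₂ ^ r)^2 :=
      (le_div_iff₀ (by positivity)).1 hchain
    have hPQ : (0:ℝ) < x₁ ^ (1-r) * x₂ ^ (1-r) :=
      mul_pos (Real.rpow_pos_of_pos hx₁ _) (Real.rpow_pos_of_pos hx₂ _)
    have hkey2 := mul_le_mul_of_nonneg_left hkey1 hPQ.le
    have hkey3 := mul_le_mul_of_nonneg_left hP (by positivity : (0:ℝ) ≤ q*(1-q))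
    have hRP : x₁ ^ (1-r) * x₁ ^ (r-1) = 1 := by
      rw [← Real.rpow_add hx₁, show (1-r)+(r-1) = 0 by ring, Real.rpow_zero]
    have hQy : x₂ ^ (1-r) * x₂ ^ r = x₂ := by
      rw [← Real.rpow_add hx₂, show (1-r)+r = 1 by ring, Real.rpow_one]
    have eL : x₁ ^ (1-r) * x₂ ^ (1-r) * (r * x₁ ^ (r-1) * (M - G) * (2 * x₂ ^ r))
        = 2*r*x₂*(M - G) := by
      calc x₁ ^ (1-r) * x₂ ^ (1-r) * (r * x₁ ^ (r-1) * (M - G) * (2 * x₂ ^ r))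
          = (x₁ ^ (1-r) * x₁ ^ (r-1)) * (x₂ ^ (1-r) * x₂ ^ r) * (2*r*(M-G)) := by ring
        _ = 1 * x₂ * (2*r*(M-G)) := by rw [hRP, hQy]
        _ = 2*r*x₂*(M - G) := by ring
    rw [eL] at hkey2
    have hfin : 2*r*x₂*(M - G) ≤ q*(1-q)*(r^2*(x₁-x₂)^2) := by
      calc 2*r*x₂*(M - G) ≤ x₁ ^ (1-r) * x₂ ^ (1-r) * (q*(1-q)*(x₁ ^ r - x₂ ^ r)^2) := hkey2
        _ = q*(1-q)*(x₁ ^ (1-r) * x₂ ^ (1-r) * (x₁ ^ r - x₂ ^ r)^2) := by ring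
        _ ≤ q*(1-q)*(r^2*(x₁-x₂)^2) := hkey3
    rw [div_mul_eq_mul_div, le_div_iff₀ (by positivity : (0:ℝ) < 2*x₂)]
    nlinarith [hfin, hr1]
  · -- case 1 ≤ r
    set σ := q*(1-q)*(x₁-x₂)^2 with hσdef
    have hσ0 : 0 ≤ σ := by
      rw [hσdef]
      exact mul_nonneg (mul_nonneg hq1.le hq2'.le) (sq_nonneg (x₁-x₂))
    have hN0 : 0 < q*x₁ + (1-q)*x₂ := by nlinarith [mul_pos hq1 hx₁, mul_pos hq2' hx₂]
    set N := q*x₁ + (1-q)*x₂ with hNdef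
    have hNx₂ : x₂ ≤ N := by nlinarith [mul_nonneg hq1.le (sub_nonneg.2 hle)]
    have hNx₁ : N ≤ x₁ := by nlinarith [mul_nonneg hq2'.le (sub_nonneg.2 hle)]
    have hxr2 : 0 < x₂ ^ (r-2) := Real.rpow_pos_of_pos hx₂ _
    set K := r*(r-1)/2*x₂^(r-2) with hKdef
    have hK0 : 0 ≤ K := by
      rw [hKdef]
      have h1 : 0 ≤ r*(r-1)/2 := by nlinarith
      exact mul_nonneg h1 hxr2.le
    have hp2a := p2 hx₂ hle hNx₂ hcase hr2
    have hp2b := p2 hx₂ (le_refl x₂) hNx₂ hcase hr2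
    have e0 : q*(N^r + r*N^(r-1)*(x₁-N) + r*(r-1)/2*x₂^(r-2)*(x₁-N)^2)
        + (1-q)*(N^r + r*N^(r-1)*(x₂-N) + r*(r-1)/2*x₂^(r-2)*(x₂-N)^2)
        = N^r + K*σ := by
      rw [hKdef, hσdef, hNdef]; ring
    have hEyN : Ey ≤ N^r + K*σ := by
      rw [hEydef]
      nlinarith [mul_le_mul_of_nonneg_left hp2a hq1.le,
        mul_le_mul_of_nonneg_left hp2b hq2'.le, e0]
    have hNr : 0 < N^r := Real.rpow_pos_of_pos hN0 r
    have hKσN : 0 ≤ K*σ/N^r := div_nonneg (mul_nonneg hK0 hσ0) hNr.le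
    have h1 : M ≤ (N^r + K*σ)^(1/r) := Real.rpow_le_rpow hEy.le hEyN (by positivity)
    have e1 : N^r + K*σ = N^r*(1 + K*σ/N^r) := by field_simp
    have hB := rpow_one_add_le_one_add_mul_self (s := K*σ/N^r) (p := 1/r)
      (by linarith) (by positivity) (by rw [div_le_one hr1]; linarith)
    have e2 : (N^r*(1 + K*σ/N^r))^(1/r) = N * (1 + K*σ/N^r)^(1/r) := by
      rw [Real.mul_rpow hNr.le (by linarith), ← Real.rpow_mul hN0.le,
        mul_one_div, div_self hr1.ne', Real.rpow_one]
    have h3 : M ≤ N * (1 + (1/r)*(K*σ/N^r)) := by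
      calc M ≤ (N^r + K*σ)^(1/r) := h1
        _ = N * (1 + K*σ/N^r)^(1/r) := by rw [e1, e2]
        _ ≤ N * (1 + (1/r)*(K*σ/N^r)) := by
            apply mul_le_mul_of_nonneg_left _ hN0.le
            rwa [show (1:ℝ) + K*σ/N^r = 1 + (K*σ/N^r) by ring] at hB
    have eNr : N / N^r = N^(1-r) := by
      rw [Real.rpow_sub hN0, Real.rpow_one]
    have e3 : N * (1 + (1/r)*(K*σ/N^r)) = N + K*σ*(N/N^r)/r := by
      field_simp
    have hNr2 : N^(1-r) ≤ x₂^(1-r) :=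
      Real.rpow_le_rpow_of_nonpos hx₂ hNx₂ (by linarith)
    have h4 : K*σ*N^(1-r)/r ≤ K*σ*x₂^(1-r)/r := by
      have step := mul_le_mul_of_nonneg_left hNr2 (mul_nonneg hK0 hσ0)
      have := div_le_div_of_nonneg_right (c := r) (by linarith [step] : K*σ*N^(1-r) ≤ K*σ*x₂^(1-r)) hr1.le
      exact this
    have ex : x₂^(r-2)*x₂^(1-r) = x₂⁻¹ := by
      rw [← Real.rpow_add hx₂, show r-2+(1-r) = -1 by ring, Real.rpow_neg_one]
    have e4 : K*σ*x₂^(1-r)/r = (r-1)*σ/(2*x₂) := by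
      have step : K*σ*x₂^(1-r)/r = (r*(r-1)/2)*σ*(x₂^(r-2)*x₂^(1-r))/r := by
        rw [hKdef]; ring
      rw [step, ex]
      field_simp
    have hMle : M ≤ N + (r-1)*σ/(2*x₂) := by
      rw [e3, eNr] at h3
      calc M ≤ N + K*σ*N^(1-r)/r := h3
        _ ≤ N + K*σ*x₂^(1-r)/r := by linarith [h4]
        _ = N + (r-1)*σ/(2*x₂) := by rw [e4]
    have hAG : N ≤ G + σ/(2*x₂) := by
      have := cf_two hx₂ hle hq1 hq2
      rw [hGdef, hNdef, hσdef]
      linarith [this]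
    have hgoal : M - G ≤ r/(2*x₂)*σ := by
      have i1 : (r-1)*σ/(2*x₂) + σ/(2*x₂) = r/(2*x₂)*σ := by
        field_simp
        ring
      linarith
    exact hgoal

/-- Two-variable case, `0 < r ≤ 2`:
`M_{2,r} - G_2 ≤ (r/(2 min(x₁,x₂))) σ_2`. -/
theorem stmt13 (x₁ x₂ q r : ℝ) (hx₁ : 0 < x₁) (hx₂ : 0 < x₂)
    (hq1 : 0 < q) (hq2 : q < 1) (hr1 : 0 < r) (hr2 : r ≤ 2)
    (A : ℝ) (hA : A = q * x₁ + (1 - q) * x₂) :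
    (q * x₁ ^ r + (1 - q) * x₂ ^ r) ^ (1 / r) - x₁ ^ q * x₂ ^ (1 - q)
      ≤ r / (2 * min x₁ x₂) * (q * (x₁ - A) ^ 2 + (1 - q) * (x₂ - A) ^ 2) := by
  have hσ : q * (x₁ - A)^2 + (1-q) * (x₂ - A)^2 = q*(1-q)*(x₁-x₂)^2 := by
    rw [hA]; ring
  rw [hσ]
  rcases le_total x₂ x₁ with hle | hle
  · rw [min_eq_right hle]
    exact aux13 hx₂ hle hq1 hq2 hr1 hr2
  · rw [min_eq_left hle]
    have h := aux13 (x₁ := x₂) (x₂ := x₁) (q := 1-q) hx₁ hle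
      (by linarith) (by linarith) hr1 hr2
    have e : (1:ℝ) - (1-q) = q := by ring
    rw [e] at h
    have e1 : (1-q)*x₂^r + q*x₁^r = q*x₁^r + (1-q)*x₂^r := by ring
    have e2 : x₂^(1-q)*x₁^q = x₁^q*x₂^(1-q) := by ring
    have e3 : r/(2*x₁)*((1-q)*q*(x₂-x₁)^2) = r/(2*x₁)*(q*(1-q)*(x₁-x₂)^2) := by ring
    rw [e1, e2, e3] at h
    exact h
end

section
/- For positive reals $x_1, x_2$ with weights $q, 1-q$ ($0 < q < 1$) and $1 \le r \le 3$, the two-variable inequality $(q x_1^r + (1-q) x_2^r)^{1/r} - x_1^q x_2^{1-q} \ge \frac{r}{2 \max(x_1,x_2)} \left( q(x_1 - A)^2 + (1-q)(x_2 - A)^2 \right)$ holds, where $A = q x_1 + (1-q) x_2$. -/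
open Real

/-- Step 1: `s^r + r s (1-s) ≤ 1` for `s ∈ [0,1]`, `r ∈ [1,3]`. -/
lemma aux1 {s r : ℝ} (hs0 : 0 ≤ s) (hs1 : s ≤ 1) (hr1 : 1 ≤ r) (hr2 : r ≤ 3) :
    s ^ r + r * s * (1 - s) ≤ 1 := by
  have key : s ^ r ≤ (3 - r)/2 * s + (r - 1)/2 * s ^ (3:ℕ) := by
    rcases eq_or_lt_of_le hs0 with h | hs0'
    · rw [← h, Real.zero_rpow (by linarith)]
      norm_num
    · have h := Real.geom_mean_le_arith_mean2_weighted (w₁ := (3-r)/2) (w₂ := (r-1)/2)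
        (p₁ := s) (p₂ := s ^ (3:ℝ)) (by linarith) (by linarith) hs0 (by positivity)
        (by ring)
      have e : s ^ ((3-r)/2) * (s ^ (3:ℝ)) ^ ((r-1)/2) = s ^ r := by
        rw [← Real.rpow_mul hs0, ← Real.rpow_add hs0']
        ring_nf
      have e3 : s ^ (3:ℝ) = s ^ (3:ℕ) := by
        rw [show (3:ℝ) = ((3:ℕ):ℝ) by norm_num, Real.rpow_natCast]
      rw [e, e3] at h
      exact h
  nlinarith [mul_nonneg (by linarith : (0:ℝ) ≤ 3 - r) (sq_nonneg (1-s)),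
    mul_nonneg (by linarith : (0:ℝ) ≤ r - 1) (pow_nonneg (by linarith : (0:ℝ) ≤ 1-s) 3)]

/-- Step 2: `t^{rq} + r q t^q (1-t) ≤ 1`. -/
lemma aux2 {t q r : ℝ} (ht0 : 0 < t) (ht1 : t ≤ 1) (hq1 : 0 < q) (hq2 : q < 1)
    (hr1 : 1 ≤ r) (hr2 : r ≤ 3) :
    t ^ (r * q) + r * q * t ^ q * (1 - t) ≤ 1 := by
  set s := t ^ q with hs
  have hs0 : 0 < s := Real.rpow_pos_of_pos ht0 q
  have hs1 : s ≤ 1 := Real.rpow_le_one ht0.le ht1 hq1.le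
  have hBern : q * (1 - t) ≤ 1 - s := by
    have h := Real.geom_mean_le_arith_mean2_weighted (w₁ := q) (w₂ := 1 - q)
      (p₁ := t) (p₂ := 1) hq1.le (by linarith) ht0.le zero_le_one (by ring)
    rw [Real.one_rpow, mul_one] at h
    rw [hs]; linarith
  have htrq : t ^ (r * q) = s ^ r := by
    rw [hs, ← Real.rpow_mul ht0.le, mul_comm]
  rw [htrq]
  have h2 : r * q * s * (1 - t) ≤ r * s * (1 - s) := by
    have : r * s * (q * (1 - t)) ≤ r * s * (1 - s) :=
      mul_le_mul_of_nonneg_left hBern (by positivity)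
    linarith [this]
  have := aux1 hs0.le hs1 hr1 hr2
  nlinarith [this, h2]

/-- Step 3: the derivative expression is nonpositive on `(0,1)`. -/
lemma aux3 {q r x : ℝ} (hq1 : 0 < q) (hq2 : q < 1) (hr1 : 1 ≤ r) (hr2 : r ≤ 3)
    (hx0 : 0 < x) (hx1 : x ≤ 1) :
    (1-q)*(r*x^(r-1)) * (1/r) * (q+(1-q)*x^r)^(1/r - 1)
      - (1-q)*x^(1-q-1) - r/2*q*(1-q)*(2*(1-x)^1*(-1)) ≤ 0 := by
  have h1q : 0 < 1 - q := by linarith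
  have hr0 : 0 < r := by linarith
  have hxr : 0 < x ^ r := Real.rpow_pos_of_pos hx0 r
  have hP : 0 < q + (1-q)*x^r := by positivity
  have hi : x ^ (r*(1-q)) ≤ q + (1-q)*x^r := by
    have h := Real.geom_mean_le_arith_mean2_weighted (w₁ := q) (w₂ := 1-q)
      (p₁ := 1) (p₂ := x^r) hq1.le h1q.le zero_le_one hxr.le (by ring)
    rw [Real.one_rpow, one_mul, mul_one] at h
    calc x ^ (r*(1-q)) = (x^r)^(1-q) := by rw [← Real.rpow_mul hx0.le]
      _ ≤ q + (1-q)*x^r := h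
  have hii : (q+(1-q)*x^r)^(1/r - 1) ≤ x ^ ((1-q)*(1-r)) := by
    have hexp : 1/r - 1 ≤ 0 := by
      have : 1/r ≤ 1 := by rw [div_le_one hr0]; linarith
      linarith
    calc (q+(1-q)*x^r)^(1/r-1)
        ≤ (x^(r*(1-q)))^(1/r-1) :=
          Real.rpow_le_rpow_of_nonpos (Real.rpow_pos_of_pos hx0 _) hi hexp
      _ = x ^ ((1-q)*(1-r)) := by
          rw [← Real.rpow_mul hx0.le]; congr 1; field_simp
  have haux := aux2 hx0 hx1 hq1 hq2 hr1 hr2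
  have hxq : 0 < x ^ (-q) := Real.rpow_pos_of_pos hx0 _
  have h5 : x ^ (q*(r-1)) + r*q*(1-x) ≤ x ^ (-q) := by
    have h := mul_le_mul_of_nonneg_right haux hxq.le
    rw [one_mul] at h
    have a1 : x ^ (r*q) * x^(-q) = x ^ (q*(r-1)) := by
      rw [← Real.rpow_add hx0]; congr 1; ring
    have a2 : x ^ q * x^(-q) = 1 := by
      rw [← Real.rpow_add hx0]; simp
    have e1 : (x ^ (r*q) + r*q*x^q*(1-x)) * x^(-q)
        = x ^ (q*(r-1)) + r*q*(1-x) := by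
      calc (x ^ (r*q) + r*q*x^q*(1-x)) * x^(-q)
          = x^(r*q)*x^(-q) + r*q*(1-x)*(x^q*x^(-q)) := by ring
        _ = x ^ (q*(r-1)) + r*q*(1-x) := by rw [a1, a2]; ring
    rw [e1] at h
    exact h
  have hmain : x^(r-1) * ((q+(1-q)*x^r)^(1/r-1)) + r*q*(1-x) ≤ x^(-q) := by
    have hxr1 : 0 < x^(r-1) := Real.rpow_pos_of_pos hx0 _
    have t1 : x^(r-1) * ((q+(1-q)*x^r)^(1/r-1)) ≤ x^(r-1) * x^((1-q)*(1-r)) :=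
      mul_le_mul_of_nonneg_left hii hxr1.le
    have t2 : x^(r-1) * x^((1-q)*(1-r)) = x^(q*(r-1)) := by
      rw [← Real.rpow_add hx0]; congr 1; ring
    rw [t2] at t1
    linarith
  have efin : (1-q)*(r*x^(r-1)) * (1/r) * ((q+(1-q)*x^r)^(1/r-1))
      = (1-q)*(x^(r-1) * ((q+(1-q)*x^r)^(1/r-1))) := by
    field_simp
  have e2 : x ^ (1-q-1) = x^(-q) := by congr 1; ring
  rw [efin, e2]
  nlinarith [mul_le_mul_of_nonneg_left hmain h1q.le]

/-- Step 4: explicit derivative of the objective function. -/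
lemma aux4 {q r x : ℝ} (hq1 : 0 < q) (hq2 : q < 1) (hr1 : 1 ≤ r) (hx0 : 0 < x) :
    HasDerivAt (fun x : ℝ => (q + (1-q)*x^r)^(1/r) - x^(1-q) - r/2*q*(1-q)*(1-x)^2)
      ((1-q)*(r*x^(r-1)) * (1/r) * (q+(1-q)*x^r)^(1/r - 1)
        - (1-q)*x^(1-q-1) - r/2*q*(1-q)*(2*(1-x)^1*(-1))) x := by
  have h1q : 0 < 1 - q := by linarith
  have hxr : 0 < x ^ r := Real.rpow_pos_of_pos hx0 r
  have hP : 0 < q + (1-q)*x^r := by positivity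
  have h1 : HasDerivAt (fun x : ℝ => x ^ r) (r * x^(r-1)) x :=
    Real.hasDerivAt_rpow_const (Or.inl hx0.ne')
  have h2 : HasDerivAt (fun x : ℝ => q + (1-q)*x^r) ((1-q)*(r*x^(r-1))) x :=
    (h1.const_mul (1-q)).const_add q
  have h3 := h2.rpow_const (p := 1/r) (Or.inl hP.ne')
  have h4 : HasDerivAt (fun x : ℝ => x ^ (1-q)) ((1-q) * x^(1-q-1)) x :=
    Real.hasDerivAt_rpow_const (Or.inl hx0.ne')
  have h5 : HasDerivAt (fun x : ℝ => r/2*q*(1-q)*(1-x)^2)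
      (r/2*q*(1-q)*(2*(1-x)^1*(-1))) x := by
    have hb : HasDerivAt (fun x : ℝ => (1-x)^2) (2*(1-x)^1*(-1)) x := by
      have := (((hasDerivAt_id x).const_sub 1).pow 2)
      exact this.congr_deriv (by simp)
    exact hb.const_mul _
  exact (h3.sub h4).sub h5

/-- Step 5: the key normalized inequality. -/
lemma key {q r t : ℝ} (hq1 : 0 < q) (hq2 : q < 1) (hr1 : 1 ≤ r) (hr2 : r ≤ 3)
    (ht0 : 0 < t) (ht1 : t ≤ 1) :
    r/2*q*(1-q)*(1-t)^2 ≤ (q + (1-q)*t^r)^(1/r) - t^(1-q) := by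
  set f : ℝ → ℝ := fun x => (q + (1-q)*x^r)^(1/r) - x^(1-q) - r/2*q*(1-q)*(1-x)^2
    with hf
  have hanti : AntitoneOn f (Set.Icc t 1) := by
    apply antitoneOn_of_deriv_nonpos (convex_Icc t 1)
    · intro x hx
      exact (aux4 hq1 hq2 hr1 (lt_of_lt_of_le ht0 hx.1)).continuousAt.continuousWithinAt
    · intro x hx
      rw [interior_Icc] at hx
      exact (aux4 hq1 hq2 hr1 (lt_trans ht0 hx.1)).differentiableAt.differentiableWithinAt
    · intro x hx
      rw [interior_Icc] at hx
      have hx0 : 0 < x := lt_trans ht0 hx.1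
      rw [(aux4 hq1 hq2 hr1 hx0).deriv]
      exact aux3 hq1 hq2 hr1 hr2 hx0 hx.2.le
  have h1 : f 1 ≤ f t := hanti (Set.mem_Icc.2 ⟨le_rfl, ht1⟩) (Set.mem_Icc.2 ⟨ht1, le_rfl⟩) ht1
  have hf1 : f 1 = 0 := by
    rw [hf]
    norm_num [Real.one_rpow]
  rw [hf] at h1 hf1
  simp only at h1
  linarith [h1, hf1]

/-- Step 6: unnormalized two-point inequality when `x₂ ≤ x₁`. -/
lemma bridge {x₁ x₂ q r : ℝ} (hx₁ : 0 < x₁) (hx₂ : 0 < x₂) (hle : x₂ ≤ x₁)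
    (hq1 : 0 < q) (hq2 : q < 1) (hr1 : 1 ≤ r) (hr2 : r ≤ 3) :
    r / (2 * x₁) * (q * (1-q) * (x₁ - x₂)^2)
      ≤ (q * x₁ ^ r + (1 - q) * x₂ ^ r) ^ (1 / r) - x₁ ^ q * x₂ ^ (1 - q) := by
  have hr0 : 0 < r := by linarith
  set t := x₂ / x₁ with hts
  have ht0 : 0 < t := div_pos hx₂ hx₁
  have ht1 : t ≤ 1 := (div_le_one hx₁).2 hle
  have hx2 : x₂ = x₁ * t := by rw [hts]; field_simp
  have htr : 0 < t ^ r := Real.rpow_pos_of_pos ht0 r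
  have hP : 0 < q + (1-q)*t^r := by
    have h1q : 0 < 1 - q := by linarith
    positivity
  have e1 : (q * x₁ ^ r + (1 - q) * x₂ ^ r) ^ (1 / r) = x₁ * (q + (1-q)*t^r)^(1/r) := by
    rw [hx2, Real.mul_rpow hx₁.le ht0.le]
    have : q * x₁ ^ r + (1 - q) * (x₁ ^ r * t ^ r) = x₁ ^ r * (q + (1-q)*t^r) := by ring
    rw [this, Real.mul_rpow (Real.rpow_pos_of_pos hx₁ r).le hP.le,
      ← Real.rpow_mul hx₁.le, mul_one_div_cancel hr0.ne', Real.rpow_one]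
  have e2 : x₁ ^ q * x₂ ^ (1 - q) = x₁ * t^(1-q) := by
    rw [hx2, Real.mul_rpow hx₁.le ht0.le, ← mul_assoc, ← Real.rpow_add hx₁]
    norm_num
  have e3 : r / (2 * x₁) * (q * (1-q) * (x₁ - x₂)^2)
      = x₁ * (r/2*q*(1-q)*(1-t)^2) := by
    rw [hx2]; field_simp
  rw [e1, e2, e3, ← mul_sub]
  exact mul_le_mul_of_nonneg_left (key hq1 hq2 hr1 hr2 ht0 ht1) hx₁.le

/-- Two-variable case, `1 ≤ r ≤ 3`:
`M_{2,r} - G_2 ≥ (r/(2 max(x₁,x₂))) σ_2`. -/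
theorem stmt14 (x₁ x₂ q r : ℝ) (hx₁ : 0 < x₁) (hx₂ : 0 < x₂)
    (hq1 : 0 < q) (hq2 : q < 1) (hr1 : 1 ≤ r) (hr2 : r ≤ 3)
    (A : ℝ) (hA : A = q * x₁ + (1 - q) * x₂) :
    r / (2 * max x₁ x₂) * (q * (x₁ - A) ^ 2 + (1 - q) * (x₂ - A) ^ 2)
      ≤ (q * x₁ ^ r + (1 - q) * x₂ ^ r) ^ (1 / r) - x₁ ^ q * x₂ ^ (1 - q) := by
  have hσ : q * (x₁ - A) ^ 2 + (1 - q) * (x₂ - A) ^ 2 = q * (1-q) * (x₁ - x₂)^2 := by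
    rw [hA]; ring
  rcases le_total x₂ x₁ with h | h
  · rw [hσ, max_eq_left h]
    exact bridge hx₁ hx₂ h hq1 hq2 hr1 hr2
  · rw [hσ, max_eq_right h]
    have h' := bridge hx₂ hx₁ h (by linarith : (0:ℝ) < 1 - q) (by linarith) hr1 hr2
    rw [show (1:ℝ) - (1-q) = q by ring] at h'
    have eL : r/(2*x₂)*(q*(1-q)*(x₁-x₂)^2) = r/(2*x₂)*((1-q)*q*(x₂-x₁)^2) := by ring
    have eR1 : q*x₁^r + (1-q)*x₂^r = (1-q)*x₂^r + q*x₁^r := by ring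
    have eR2 : x₁^q*x₂^(1-q) = x₂^(1-q)*x₁^q := by ring
    rw [eL, eR1, eR2]
    exact h'
end

section
/- For $2 < r \le 3$, $0 < q < 1$, and $0 < x \le 1$, the inequality $j(x,q) := q(2-q)x^{r+q-2} + (1-q)(2-q)x^{q-2} + q(r^2-1)x^r - (1-q)(r-1)(r-2) \ge 0$ holds. -/
/-- For `2 < r ≤ 3`, `0 < q < 1`, `0 < x ≤ 1`:
`j(x,q) = q(2-q)x^{r+q-2} + (1-q)(2-q)x^{q-2} + q(r²-1)x^r - (1-q)(r-1)(r-2) ≥ 0`. -/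
theorem stmt15 (r q x : ℝ) (hr1 : 2 < r) (hr2 : r ≤ 3)
    (hq1 : 0 < q) (hq2 : q < 1) (hx1 : 0 < x) (hx2 : x ≤ 1) :
    0 ≤ q * (2 - q) * x ^ (r + q - 2) + (1 - q) * (2 - q) * x ^ (q - 2)
        + q * (r ^ 2 - 1) * x ^ r - (1 - q) * (r - 1) * (r - 2) := by
  have h1 : x ^ (-1 : ℝ) ≤ x ^ (q - 2) :=
    Real.rpow_le_rpow_of_exponent_ge hx1 hx2 (by linarith)
  have h2 : x ^ (3 : ℝ) ≤ x ^ r :=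
    Real.rpow_le_rpow_of_exponent_ge hx1 hx2 hr2
  rw [Real.rpow_neg_one] at h1
  rw [show (3 : ℝ) = ((3 : ℕ) : ℝ) by norm_num, Real.rpow_natCast] at h2
  have h5 : 0 ≤ x ^ (r + q - 2) := (Real.rpow_pos_of_pos hx1 _).le
  have hterm1 : 0 ≤ q * (2 - q) * x ^ (r + q - 2) := by
    apply mul_nonneg (by nlinarith) h5
  have hinv : (0 : ℝ) < x⁻¹ := inv_pos.mpr hx1
  have hix : x⁻¹ * x = 1 := inv_mul_cancel₀ hx1.ne'
  have hxinv : (1 : ℝ) ≤ x⁻¹ := by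
    nlinarith [mul_le_mul_of_nonneg_left hx2 hinv.le]
  have key : (1 - q) * (r - 1) * (r - 2)
      ≤ (1 - q) * (2 - q) * x⁻¹ + q * (r ^ 2 - 1) * (x ^ (3 : ℕ)) := by
    have hx3 : 0 ≤ x ^ (3 : ℕ) := by positivity
    have hrr : (r - 1) * (r - 2) ≤ 2 := by nlinarith
    rcases le_or_gt (2 * x) (2 - q) with hc | hc
    · have h6 : 2 ≤ (2 - q) * x⁻¹ := by
        nlinarith [mul_le_mul_of_nonneg_left hc hinv.le]
      nlinarith [mul_nonneg (mul_nonneg hq1.le (by nlinarith : (0:ℝ) ≤ r^2 - 1)) hx3,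
        mul_le_mul_of_nonneg_left h6 (by linarith : (0:ℝ) ≤ 1 - q)]
    · have h8 : (2 - q) ^ 3 ≤ 8 * x ^ (3 : ℕ) := by nlinarith [sq_nonneg (2*x - (2-q)), sq_nonneg (2*x + (2-q))]
      have h9 : (3 : ℝ) ≤ r ^ 2 - 1 := by nlinarith
      have h10 : 8 * (1 - q) ≤ 3 * (2 - q) ^ 3 := by nlinarith [sq_nonneg q, sq_nonneg (1 - q)]
      nlinarith [mul_le_mul_of_nonneg_left hxinv
          (mul_nonneg (by linarith : (0:ℝ) ≤ 1 - q) (by linarith : (0:ℝ) ≤ 2 - q)),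
        mul_le_mul_of_nonneg_left h8 hq1.le,
        mul_le_mul_of_nonneg_left h9 (mul_nonneg hq1.le hx3),
        mul_nonneg (mul_nonneg hq1.le hx3) (by linarith : (0:ℝ) ≤ r^2 - 1 - 3)]
  have hterm2 : (1 - q) * (2 - q) * x⁻¹ ≤ (1 - q) * (2 - q) * x ^ (q - 2) := by
    apply mul_le_mul_of_nonneg_left h1
    nlinarith
  have hterm3 : q * (r ^ 2 - 1) * (x ^ (3 : ℕ)) ≤ q * (r ^ 2 - 1) * x ^ r := by
    exact mul_le_mul_of_nonneg_left h2
      (mul_nonneg hq1.le (by nlinarith : (0:ℝ) ≤ r ^ 2 - 1))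
  linarith
end

section
/- The lower bound analogue of the main theorem fails: for $n = 2$, $r \ge 2$, weights $q_1 = 1-q$, $q_2 = q$ with $0 < q < 1/2$, and $x_1 = 0$, $x_2 = 1$, one has $M_{2,1/r} - q^{r-1} A_2 - (1-q^{r-1}) G_2 = 0$ while $\frac{1/r - q^{r-1}}{2 x_2}\sigma_2 > 0$ whenever $q^{r-1} < 1/r$, so the inequality $M_{n,1/r} - q^{r-1}A_n - (1-q^{r-1})G_n \ge \frac{1/r - q^{r-1}}{2 x_n}\sigma_n$ does not hold in general. -/
/-- The lower-bound analogue fails: for `n = 2`, `x₁ = 0`, `x₂ = 1`, weights `(1-q, q)`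
with `0 < q < 1/2` and `r ≥ 2` with `q^{r-1} < 1/r`, the left-hand side is `0`,
the right-hand side is positive, so
`M_{2,1/r} - q^{r-1} A₂ - (1-q^{r-1}) G₂ ≥ ((1/r - q^{r-1})/(2 x₂)) σ₂` fails. -/
theorem stmt19 (r q : ℝ) (hr : 2 ≤ r) (hq1 : 0 < q) (hq2 : q < 1 / 2)
    (hqr : q ^ (r - 1) < 1 / r)
    (A : ℝ) (hA : A = (1 - q) * 0 + q * 1)
    (σ : ℝ) (hσ : σ = (1 - q) * (0 - A) ^ 2 + q * (1 - A) ^ 2) :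
    ((1 - q) * (0 : ℝ) ^ (1 / r) + q * (1 : ℝ) ^ (1 / r)) ^ r
        - q ^ (r - 1) * A - (1 - q ^ (r - 1)) * ((0 : ℝ) ^ (1 - q) * (1 : ℝ) ^ q) = 0
      ∧ 0 < (1 / r - q ^ (r - 1)) / (2 * 1) * σ
      ∧ ¬ ((1 / r - q ^ (r - 1)) / (2 * 1) * σ
            ≤ ((1 - q) * (0 : ℝ) ^ (1 / r) + q * (1 : ℝ) ^ (1 / r)) ^ r
                - q ^ (r - 1) * A
                - (1 - q ^ (r - 1)) * ((0 : ℝ) ^ (1 - q) * (1 : ℝ) ^ q)) := by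
  have hr0 : (0:ℝ) < r := by linarith
  have h1r : (1:ℝ)/r ≠ 0 := by positivity
  have h1q : (1:ℝ) - q ≠ 0 := by linarith
  have hz1 : (0:ℝ) ^ (1/r) = 0 := Real.zero_rpow h1r
  have hz2 : (0:ℝ) ^ (1-q) = 0 := Real.zero_rpow h1q
  have hone : ∀ s : ℝ, (1:ℝ) ^ s = 1 := fun s => Real.one_rpow s
  have key : ((1 - q) * (0 : ℝ) ^ (1 / r) + q * (1 : ℝ) ^ (1 / r)) ^ r
        - q ^ (r - 1) * A - (1 - q ^ (r - 1)) * ((0 : ℝ) ^ (1 - q) * (1 : ℝ) ^ q) = 0 := by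
    rw [hz1, hz2, hone, hone, hA]
    ring_nf
    have h : q * q ^ (-1 + r) = q ^ r := by
      calc q * q ^ (-1 + r) = q ^ (1:ℝ) * q ^ (-1 + r) := by rw [Real.rpow_one]
        _ = q ^ (1 + (-1 + r)) := (Real.rpow_add hq1 _ _).symm
        _ = q ^ r := by ring_nf
    linarith
  have hσpos : 0 < σ := by
    rw [hσ, hA]; nlinarith
  have hrhs : 0 < (1 / r - q ^ (r - 1)) / (2 * 1) * σ := by
    apply mul_pos _ hσpos
    have : 0 < 1/r - q^(r-1) := by linarith
    linarith
  exact ⟨key, hrhs, by rw [key]; linarith⟩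
end
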